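/- arXiv:2008.03486 — 6 statements merged into one kernel-verified Lean document; each statement's English description precedes it below -/
import Mathlib

section
/- Let f : [0,1] → [0,1] be continuous, surjective, and not admitting a splitting sequence. Suppose d is an M-type fixed point of f witnessed by (c, e), i.e., c < d < e, d is the unique fixed point in (c, e), c = 0 or c is a fixed point, e = 1 or e is a fixed point, and f(x) ≥ x for all x ∈ [c, e]. Then c and e are fixed points of f, and max f([0, d]) = d. -/
open Set Filter Topology

/-- `IsSplittingSeq f l r N S` : the sequence of closed proper subintervals
`T n = Icc (l n) (r n)` of `[0,1]` is a tight sequence for `f` (i.e. `f (T (n+1)) = T n`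
and `T n` is nondegenerate for all large `n`), and it is split by the nondegenerate
closed intervals `S n` for `n` in the infinite set `N`, meaning
`S n ∩ T n ⊆ {l n, r n}` and `f (S n) = f (T n)`. -/
def IsSplittingSeq (f : ℝ → ℝ) (l r : ℕ → ℝ) (N : Set ℕ) (S : ℕ → Set ℝ) : Prop :=
  (∀ n, l n ≤ r n) ∧
  (∀ n, Icc (l n) (r n) ⊆ Icc 0 1) ∧
  (∀ n, Icc (l n) (r n) ≠ Icc (0:ℝ) 1) ∧
  (∀ n, f '' Icc (l (n+1)) (r (n+1)) = Icc (l n) (r n)) ∧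
  (∃ m, ∀ n > m, l n < r n) ∧
  N.Infinite ∧
  (∀ n ∈ N, (∃ u v : ℝ, u < v ∧ S n = Icc u v) ∧ S n ⊆ Icc 0 1 ∧
    S n ∩ Icc (l n) (r n) ⊆ {l n, r n} ∧ f '' S n = f '' Icc (l n) (r n))

/-- `f` admits a splitting sequence. -/
def SplittingSeq (f : ℝ → ℝ) : Prop := ∃ l r N S, IsSplittingSeq f l r N S

lemma sub_onto {f : ℝ → ℝ} {a b A B : ℝ} (hab : a ≤ b)
    (hf : ContinuousOn f (Icc a b)) (hAB : A < B) (hfa : B ≤ f a) (hfb : f b ≤ A) :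
    ∃ u v, a ≤ u ∧ u < v ∧ v ≤ b ∧ f '' Icc u v = Icc A B := by
  have hcl : IsClosed (Icc a b ∩ f ⁻¹' {A}) :=
    hf.preimage_isClosed_of_isClosed isClosed_Icc isClosed_singleton
  have hne : (Icc a b ∩ f ⁻¹' {A}).Nonempty := by
    obtain ⟨y, hy, hfy⟩ := intermediate_value_Icc' hab hf ⟨hfb, hAB.le.trans hfa⟩
    exact ⟨y, hy, hfy⟩
  have hbdd : BddBelow (Icc a b ∩ f ⁻¹' {A}) := bddBelow_Icc.mono inter_subset_left
  set v := sInf (Icc a b ∩ f ⁻¹' {A}) with hv_def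
  have hv : v ∈ Icc a b ∩ f ⁻¹' {A} := hcl.csInf_mem hne hbdd
  have hfv : f v = A := hv.2
  have hgeA : ∀ x ∈ Icc a v, A ≤ f x := by
    intro x hx
    by_contra h
    push_neg at h
    have hxb : x ≤ b := hx.2.trans hv.1.2
    obtain ⟨y, hy, hfy⟩ := intermediate_value_Icc' hx.1
      (hf.mono (Icc_subset_Icc le_rfl hxb)) ⟨h.le, hAB.le.trans hfa⟩
    have hyv : v ≤ y := csInf_le hbdd ⟨⟨hy.1, hy.2.trans hxb⟩, hfy⟩
    have hyx : y = x := le_antisymm hy.2 (hx.2.trans hyv)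
    rw [hyx] at hfy
    linarith
  have hfav : ContinuousOn f (Icc a v) := hf.mono (Icc_subset_Icc le_rfl hv.1.2)
  have hcl2 : IsClosed (Icc a v ∩ f ⁻¹' {B}) :=
    hfav.preimage_isClosed_of_isClosed isClosed_Icc isClosed_singleton
  have hne2 : (Icc a v ∩ f ⁻¹' {B}).Nonempty := by
    obtain ⟨y, hy, hfy⟩ := intermediate_value_Icc' hv.1.1 hfav
      ⟨by rw [hfv]; exact hAB.le, hfa⟩
    exact ⟨y, hy, hfy⟩
  have hbdd2 : BddAbove (Icc a v ∩ f ⁻¹' {B}) := bddAbove_Icc.mono inter_subset_left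
  set u := sSup (Icc a v ∩ f ⁻¹' {B}) with hu_def
  have hu : u ∈ Icc a v ∩ f ⁻¹' {B} := hcl2.csSup_mem hne2 hbdd2
  have hfu : f u = B := hu.2
  have huv : u ≤ v := hu.1.2
  have hleB : ∀ x ∈ Icc u v, f x ≤ B := by
    intro x hx
    by_contra h
    push_neg at h
    have hax : a ≤ x := hu.1.1.trans hx.1
    obtain ⟨y, hy, hfy⟩ := intermediate_value_Icc' hx.2
      (hf.mono (Icc_subset_Icc hax hv.1.2)) ⟨by rw [hfv]; exact hAB.le, h.le⟩
    have hyu : y ≤ u := le_csSup hbdd2 ⟨⟨hax.trans hy.1, hy.2⟩, hfy⟩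
    have hyx : y = x := le_antisymm (hyu.trans hx.1) hy.1
    rw [hyx] at hfy
    linarith
  have hultv : u < v := by
    rcases lt_or_eq_of_le huv with h | h
    · exact h
    · exfalso; rw [h, hfv] at hfu; linarith
  refine ⟨u, v, hu.1.1, hultv, hv.1.2, ?_⟩
  apply Subset.antisymm
  · rintro y ⟨x, hx, rfl⟩
    exact ⟨hgeA x ⟨hu.1.1.trans hx.1, hx.2⟩, hleB x hx⟩
  · have h := intermediate_value_Icc' huv (hf.mono (Icc_subset_Icc hu.1.1 hv.1.2))
    rwa [hfu, hfv] at h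

noncomputable def seqR (f : ℝ → ℝ) (d e B₀ : ℝ) : ℕ → ℝ
  | 0 => B₀
  | n+1 => sInf (Icc d e ∩ f ⁻¹' {seqR f d e B₀ n})

lemma exists_splitting_aux {f : ℝ → ℝ} {c d e a b B₀ : ℝ}
    (hf : ContinuousOn f (Icc 0 1)) (hc0 : 0 ≤ c) (hcd : c < d) (hde : d < e) (he1 : e ≤ 1)
    (hfd : f d = d) (hM : ∀ x ∈ Icc c e, x ≤ f x)
    (hB : d < B₀) (hBe : B₀ ≤ e)
    (hab : a ≤ b) (ha0 : 0 ≤ a) (hb1 : b ≤ 1)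
    (hfa : B₀ ≤ f a) (hfb : f b ≤ d)
    (hside : b ≤ d ∨ e ≤ a) :
    SplittingSeq f := by
  have hce : c ≤ e := (hcd.trans hde).le
  have hd0 : 0 < d := lt_of_le_of_lt hc0 hcd
  have hd1 : d ≤ 1 := hde.le.trans he1
  have hfcont : ContinuousOn f (Icc d e) := hf.mono (Icc_subset_Icc hd0.le he1)
  have hfe : e ≤ f e := hM e ⟨hce, le_rfl⟩
  set r : ℕ → ℝ := seqR f d e B₀ with hr_def
  have hr0 : r 0 = B₀ := rfl
  have hrsucc : ∀ n, r (n+1) = sInf (Icc d e ∩ f ⁻¹' {r n}) := fun n => rfl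
  have hscl : ∀ t : ℝ, IsClosed (Icc d e ∩ f ⁻¹' {t}) := fun t =>
    hfcont.preimage_isClosed_of_isClosed isClosed_Icc isClosed_singleton
  have hsbdd : ∀ t : ℝ, BddBelow (Icc d e ∩ f ⁻¹' {t}) := fun t =>
    bddBelow_Icc.mono inter_subset_left
  have step : ∀ t, d < t → t ≤ B₀ →
      sInf (Icc d e ∩ f ⁻¹' {t}) ∈ Icc d e ∧ f (sInf (Icc d e ∩ f ⁻¹' {t})) = t ∧
      d < sInf (Icc d e ∩ f ⁻¹' {t}) ∧ sInf (Icc d e ∩ f ⁻¹' {t}) ≤ B₀ := by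
    intro t ht htB
    have hne : (Icc d e ∩ f ⁻¹' {t}).Nonempty := by
      obtain ⟨y, hy, hfy⟩ := intermediate_value_Icc hde.le hfcont
        ⟨by rw [hfd]; exact ht.le, (htB.trans hBe).trans hfe⟩
      exact ⟨y, hy, hfy⟩
    have hmem := (hscl t).csInf_mem hne (hsbdd t)
    have hfm : f (sInf (Icc d e ∩ f ⁻¹' {t})) = t := hmem.2
    refine ⟨hmem.1, hfm, ?_, ?_⟩
    · rcases lt_or_eq_of_le hmem.1.1 with h | h
      · exact h
      · exfalso; rw [← h, hfd] at hfm; exact ht.ne hfm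
    · have h2 := hM _ ⟨hcd.le.trans hmem.1.1, hmem.1.2⟩
      rw [hfm] at h2
      exact h2.trans htB
  have key : ∀ n, (d < r n ∧ r n ≤ B₀) ∧ (r (n+1) ∈ Icc d e ∧ f (r (n+1)) = r n) := by
    intro n
    induction n with
    | zero =>
      have h := step B₀ hB le_rfl
      exact ⟨⟨hB, le_rfl⟩, by rw [hrsucc, hr0]; exact ⟨h.1, h.2.1⟩⟩
    | succ n ih =>
      have h1 := step (r n) ih.1.1 ih.1.2
      have hd1' : d < r (n+1) := by rw [hrsucc]; exact h1.2.2.1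
      have hB1' : r (n+1) ≤ B₀ := by rw [hrsucc]; exact h1.2.2.2
      have h2 := step (r (n+1)) hd1' hB1'
      exact ⟨⟨hd1', hB1'⟩, by rw [hrsucc (n+1)]; exact ⟨h2.1, h2.2.1⟩⟩
  have himg : ∀ n, f '' Icc d (r (n+1)) = Icc d (r n) := by
    intro n
    obtain ⟨⟨hrn, hrnB⟩, hmem, hfr⟩ := key n
    have hr1e : r (n+1) ≤ e := hmem.2
    have hr1d : d ≤ r (n+1) := hmem.1
    have hcont : ContinuousOn f (Icc d (r (n+1))) := hfcont.mono (Icc_subset_Icc le_rfl hr1e)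
    apply Subset.antisymm
    · rintro y ⟨x, hx, rfl⟩
      refine ⟨le_trans hx.1 (hM x ⟨hcd.le.trans hx.1, hx.2.trans hr1e⟩), ?_⟩
      by_contra h
      push_neg at h
      obtain ⟨y, hy, hfy⟩ := intermediate_value_Icc hx.1
        (hcont.mono (Icc_subset_Icc le_rfl hx.2)) ⟨by rw [hfd]; exact hrn.le, h.le⟩
      have hyr : r (n+1) ≤ y := by
        rw [hrsucc]
        exact csInf_le (hsbdd _) ⟨⟨hy.1, hy.2.trans (hx.2.trans hr1e)⟩, hfy⟩
      have hyx : y = x := le_antisymm hy.2 (hx.2.trans hyr)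
      rw [hyx] at hfy
      linarith
    · have h := intermediate_value_Icc hr1d hcont
      rwa [hfd, hfr] at h
  have hS : ∀ n, ∃ u v, a ≤ u ∧ u < v ∧ v ≤ b ∧ f '' Icc u v = Icc d (r n) := by
    intro n
    obtain ⟨⟨hrn, hrnB⟩, _⟩ := key n
    exact sub_onto hab (hf.mono (Icc_subset_Icc ha0 hb1)) hrn (hrnB.trans hfa) hfb
  choose u v hu huv hv himgS using hS
  refine ⟨fun _ => d, fun n => r (n+1), univ, fun n => Icc (u n) (v n),
    fun n => ((key n).2.1).1, fun n => Icc_subset_Icc hd0.le (((key n).2.1).2.trans he1),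
    ?_, fun n => himg (n+1), ⟨0, fun n _ => (key (n+1)).1.1⟩, infinite_univ, ?_⟩
  · intro n h
    have h0 : (0:ℝ) ∈ Icc d (r (n+1)) := h ▸ left_mem_Icc.mpr zero_le_one
    exact absurd h0.1 (not_le.mpr hd0)
  · intro n _
    refine ⟨⟨u n, v n, huv n, rfl⟩, Icc_subset_Icc (ha0.trans (hu n)) ((hv n).trans hb1),
      ?_, by rw [himgS n, himg n]⟩
    intro x hx
    rcases hside with h | h
    · have hxd : x = d := le_antisymm (hx.1.2.trans ((hv n).trans h)) hx.2.1
      exact Or.inl hxd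
    · have hxr : x = r (n+1) :=
        le_antisymm hx.2.2 ((((key n).2.1).2.trans (h.trans (hu n))).trans hx.1.1)
      exact Or.inr hxr

theorem stmt_12 (f : ℝ → ℝ) (hf : ContinuousOn f (Icc 0 1))
    (hsurj : f '' Icc 0 1 = Icc 0 1) (hns : ¬ SplittingSeq f)
    (c d e : ℝ) (hc0 : 0 ≤ c) (hcd : c < d) (hde : d < e) (he1 : e ≤ 1)
    (hfd : f d = d) (huniq : ∀ x ∈ Ioo c e, f x = x → x = d)
    (hc : c = 0 ∨ f c = c) (he : e = 1 ∨ f e = e)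
    (hM : ∀ x ∈ Icc c e, x ≤ f x) :
    f c = c ∧ f e = e ∧ IsGreatest (f '' Icc 0 d) d := by
  have hce : c ≤ e := (hcd.trans hde).le
  have hd0 : 0 < d := lt_of_le_of_lt hc0 hcd
  have hd1 : d ≤ 1 := hde.le.trans he1
  have hmaps : ∀ x ∈ Icc (0:ℝ) 1, f x ∈ Icc (0:ℝ) 1 := by
    intro x hx; rw [← hsurj]; exact ⟨x, hx, rfl⟩
  have hfe : f e = e := by
    rcases he with h | h
    · subst h
      exact le_antisymm (hmaps 1 ⟨zero_le_one, le_rfl⟩).2 (hM 1 ⟨hce, le_rfl⟩)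
    · exact h
  have hub : ∀ x ∈ Icc (0:ℝ) d, f x ≤ d := by
    intro x hx
    by_contra h
    push_neg at h
    exact hns (exists_splitting_aux hf hc0 hcd hde he1 hfd hM (lt_min hde h)
      (min_le_left _ _) hx.2 hx.1 hd1 (min_le_right _ _) (le_of_eq hfd) (Or.inl le_rfl))
  have hfc : f c = c := by
    rcases hc with h | h
    · subst h
      have h0 : 0 ≤ f 0 := hM 0 ⟨le_rfl, hce⟩
      refine le_antisymm ?_ h0
      by_contra hpos
      push_neg at hpos
      obtain ⟨z, hz, hfz⟩ : ∃ z ∈ Icc (0:ℝ) 1, f z = 0 := by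
        have h1 : (0:ℝ) ∈ f '' Icc 0 1 := by rw [hsurj]; exact ⟨le_rfl, zero_le_one⟩
        obtain ⟨z, hz, hfz⟩ := h1; exact ⟨z, hz, hfz⟩
      have hez : e ≤ z := by
        by_contra hez
        push_neg at hez
        have hz0 : z ≤ 0 := by
          have h2 := hM z ⟨hz.1, hez.le⟩; rw [hfz] at h2; exact h2
        have hz00 : z = 0 := le_antisymm hz0 hz.1
        rw [hz00] at hfz; linarith
      exact hns (exists_splitting_aux hf hc0 hcd hde he1 hfd hM hde le_rfl hez
        (hc0.trans hce) hz.2 hfe.ge (by rw [hfz]; exact hd0.le) (Or.inr le_rfl))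
    · exact h
  refine ⟨hfc, hfe, ⟨⟨d, ⟨hd0.le, le_rfl⟩, hfd⟩, ?_⟩⟩
  rintro y ⟨x, hx, rfl⟩
  exact hub x hx
end

section
/- Let f : [0,1] → [0,1] be continuous, surjective, and not admitting a splitting sequence, and suppose f admits a 2-cycle {s, t} with s ∈ {0, 1}. Then a = max f⁻¹(0) and b = min f⁻¹(1) satisfy b < a. -/
open Set Filter Topology

lemma tight_core (f : ℝ → ℝ) {α β u v : ℝ} (hαβ : α ≤ β)
    (hf : ContinuousOn f (Icc α β)) (hu : f α = u) (hv : f β = v) (huv : u ≤ v) :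
    ∃ p q, α ≤ p ∧ p ≤ q ∧ q ≤ β ∧ f '' Icc p q = Icc u v := by
  set B : Set ℝ := Icc α β ∩ f ⁻¹' {v} with hBdef
  have hBclosed : IsClosed B := hf.preimage_isClosed_of_isClosed isClosed_Icc isClosed_singleton
  have hBne : B.Nonempty := ⟨β, right_mem_Icc.2 hαβ, hv⟩
  have hBbdd : BddBelow B := ⟨α, fun x hx => hx.1.1⟩
  set q := sInf B with hqdef
  have hqB : q ∈ B := hBclosed.csInf_mem hBne hBbdd
  have hαq : α ≤ q := hqB.1.1
  have hqβ : q ≤ β := hqB.1.2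
  have hfq : f q = v := hqB.2
  set A : Set ℝ := Icc α q ∩ f ⁻¹' {u} with hAdef
  have hAclosed : IsClosed A :=
    (hf.mono (Icc_subset_Icc le_rfl hqβ)).preimage_isClosed_of_isClosed isClosed_Icc
      isClosed_singleton
  have hAne : A.Nonempty := ⟨α, left_mem_Icc.2 hαq, hu⟩
  have hAbdd : BddAbove A := ⟨q, fun x hx => hx.1.2⟩
  set p := sSup A with hpdef
  have hpA : p ∈ A := hAclosed.csSup_mem hAne hAbdd
  have hαp : α ≤ p := hpA.1.1
  have hpq : p ≤ q := hpA.1.2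
  have hfp : f p = u := hpA.2
  have hsub : Icc p q ⊆ Icc α β := Icc_subset_Icc hαp (hqβ)
  have hfpq : ContinuousOn f (Icc p q) := hf.mono hsub
  refine ⟨p, q, hαp, hpq, hqβ, subset_antisymm ?_ ?_⟩
  · rintro y ⟨x, hx, rfl⟩
    constructor
    · by_contra hlt
      push_neg at hlt
      have : u ∈ Icc (f x) (f q) := ⟨hlt.le, hfq ▸ huv⟩
      obtain ⟨z, hz, hfz⟩ := intermediate_value_Icc hx.2 (hfpq.mono (Icc_subset_Icc hx.1 le_rfl)) this
      have hzA : z ∈ A := ⟨⟨hαp.trans (hx.1.trans hz.1), hz.2⟩, hfz⟩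
      have : z ≤ p := le_csSup hAbdd hzA
      have hxz : x = p := le_antisymm (by linarith [hz.1]) hx.1
      rw [hxz, hfp] at hlt; exact lt_irrefl u hlt
    · by_contra hlt
      push_neg at hlt
      have : v ∈ Icc (f p) (f x) := ⟨hfp ▸ huv, hlt.le⟩
      obtain ⟨z, hz, hfz⟩ := intermediate_value_Icc hx.1 (hfpq.mono (Icc_subset_Icc le_rfl hx.2)) this
      have hzB : z ∈ B := ⟨⟨hαp.trans hz.1, hz.2.trans (hx.2.trans le_rfl) |>.trans hqβ⟩, hfz⟩
      have : q ≤ z := csInf_le hBbdd hzB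
      have hxz : x = q := le_antisymm hx.2 (by linarith [hz.2])
      rw [hxz, hfq] at hlt; exact lt_irrefl v hlt
  · have := intermediate_value_Icc hpq hfpq
    rwa [hfp, hfq] at this

lemma tight_core' (f : ℝ → ℝ) {α β u v : ℝ} (hαβ : α ≤ β)
    (hf : ContinuousOn f (Icc α β)) (hu : f α = v) (hv : f β = u) (huv : u ≤ v) :
    ∃ p q, α ≤ p ∧ p ≤ q ∧ q ≤ β ∧ f '' Icc p q = Icc u v := by
  have hneg : ∀ x ∈ Icc (-β) (-α), -x ∈ Icc α β := by
    rintro x ⟨h1, h2⟩; exact ⟨by linarith, by linarith⟩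
  have hg : ContinuousOn (fun x => f (-x)) (Icc (-β) (-α)) :=
    hf.comp (continuousOn_neg) hneg
  obtain ⟨p, q, h1, h2, h3, h4⟩ := tight_core (fun x => f (-x)) (neg_le_neg hαβ) hg
    (by simp [hv]) (by simp [hu]) huv
  refine ⟨-q, -p, by linarith, by linarith, by linarith, ?_⟩
  rw [← h4]
  have : Icc (-q) (-p) = (fun x : ℝ => -x) '' Icc p q := by
    ext z
    simp only [mem_image, mem_Icc]
    constructor
    · rintro ⟨h5, h6⟩; exact ⟨-z, ⟨by linarith, by linarith⟩, by ring⟩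
    · rintro ⟨w, ⟨h5, h6⟩, rfl⟩; exact ⟨by linarith, by linarith⟩
  rw [this, ← Set.image_comp]
  rfl

lemma tight_sub (f : ℝ → ℝ) {α β u v : ℝ} (hαβ : α ≤ β)
    (hf : ContinuousOn f (Icc α β)) (huv : u ≤ v)
    (hsub : Icc u v ⊆ f '' Icc α β) :
    ∃ p q, α ≤ p ∧ p ≤ q ∧ q ≤ β ∧ f '' Icc p q = Icc u v := by
  obtain ⟨x, hx, hfx⟩ := hsub (left_mem_Icc.2 huv)
  obtain ⟨y, hy, hfy⟩ := hsub (right_mem_Icc.2 huv)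
  rcases le_total x y with h | h
  · obtain ⟨p, q, h1, h2, h3, h4⟩ :=
      tight_core f h (hf.mono (Icc_subset_Icc hx.1 hy.2)) hfx hfy huv
    exact ⟨p, q, hx.1.trans h1, h2, h3.trans hy.2, h4⟩
  · obtain ⟨p, q, h1, h2, h3, h4⟩ :=
      tight_core' f h (hf.mono (Icc_subset_Icc hy.1 hx.2)) hfy hfx huv
    exact ⟨p, q, hy.1.trans h1, h2, h3.trans hx.2, h4⟩

theorem stmt_15 (f : ℝ → ℝ) (hf : ContinuousOn f (Icc 0 1))
    (hsurj : f '' Icc 0 1 = Icc 0 1) (hns : ¬ SplittingSeq f)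
    (s t : ℝ) (hs01 : s = 0 ∨ s = 1) (ht : t ∈ Icc (0:ℝ) 1)
    (hst : s ≠ t) (h1 : f s = t) (h2 : f t = s)
    (a b : ℝ)
    (ha : IsGreatest {x ∈ Icc (0:ℝ) 1 | f x = 0} a)
    (hb : IsLeast {x ∈ Icc (0:ℝ) 1 | f x = 1} b) :
    b < a := by
  by_contra hab
  push_neg at hab
  obtain ⟨⟨⟨ha0, ha1⟩, hfa⟩, hamax⟩ := ha
  obtain ⟨⟨⟨hb0, hb1⟩, hfb⟩, hbmin⟩ := hb
  have hane : a ≠ b := by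
    intro h; rw [h, hfb] at hfa; norm_num at hfa
  have hab' : a < b := lt_of_le_of_ne hab hane
  -- base interval [α, β] with f '' [α,β] ⊇ [α,β], on one side of (a,b)
  obtain ⟨α, β, hαβ, hA0, hA1, hfA, hsep⟩ :
      ∃ α β : ℝ, α < β ∧ 0 ≤ α ∧ β ≤ 1 ∧ Icc α β ⊆ f '' Icc α β ∧ (β ≤ a ∨ b ≤ α) := by
    rcases hs01 with rfl | rfl
    · have ht0 : 0 < t := lt_of_le_of_ne ht.1 (by simpa using hst)
      have hta : t ≤ a := hamax ⟨⟨ht.1, ht.2⟩, h2⟩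
      refine ⟨0, t, ht0, le_refl _, ht.2, ?_, Or.inl hta⟩
      have := intermediate_value_Icc' ht.1 (hf.mono (Icc_subset_Icc le_rfl ht.2))
      rwa [h1, h2] at this
    · have ht1 : t < 1 := lt_of_le_of_ne ht.2 (Ne.symm (by simpa using hst))
      have hbt : b ≤ t := hbmin ⟨⟨ht.1, ht.2⟩, h2⟩
      refine ⟨t, 1, ht1, ht.1, le_refl _, ?_, Or.inr hbt⟩
      have := intermediate_value_Icc' ht.2 (hf.mono (Icc_subset_Icc ht.1 le_rfl))
      rwa [h1, h2] at this
  have hAsub : Icc α β ⊆ Icc 0 1 := Icc_subset_Icc hA0 hA1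
  have hf' : ContinuousOn f (Icc α β) := hf.mono hAsub
  -- condition on pairs
  set C : ℝ × ℝ → Prop := fun p => α ≤ p.1 ∧ p.1 < p.2 ∧ p.2 ≤ β with hCdef
  have key : ∀ p : ℝ × ℝ, ∃ q : ℝ × ℝ,
      C p → C q ∧ f '' Icc q.1 q.2 = Icc p.1 p.2 := by
    intro p
    by_cases hC : C p
    · obtain ⟨u', v', h1', h2', h3', h4'⟩ := tight_sub f hαβ.le hf' hC.2.1.le
        (fun x hx => hfA ⟨hC.1.trans hx.1, hx.2.trans hC.2.2⟩)
      have huv' : u' < v' := by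
        rcases lt_or_eq_of_le h2' with h | h
        · exact h
        · exfalso
          subst h
          have hu : p.1 ∈ Icc p.1 p.2 := left_mem_Icc.2 hC.2.1.le
          have hv : p.2 ∈ Icc p.1 p.2 := right_mem_Icc.2 hC.2.1.le
          rw [← h4'] at hu hv
          obtain ⟨x, hx, hfx⟩ := hu
          obtain ⟨y, hy, hfy⟩ := hv
          have : x = u' := le_antisymm hx.2 hx.1
          have hy' : y = u' := le_antisymm hy.2 hy.1
          rw [this] at hfx; rw [hy'] at hfy
          rw [hfx] at hfy
          exact absurd hfy (ne_of_lt hC.2.1)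
      exact ⟨(u', v'), fun _ => ⟨⟨h1', huv', h3'⟩, h4'⟩⟩
    · exact ⟨p, fun h => absurd h hC⟩
  choose g hg using key
  set U : ℕ → ℝ × ℝ := fun n => g^[n] (α, β) with hUdef
  have hCU : ∀ n, C (U n) := by
    intro n
    induction n with
    | zero => exact ⟨le_refl _, hαβ, le_refl _⟩
    | succ n ih =>
      have : U (n+1) = g (U n) := Function.iterate_succ_apply' g n (α, β)
      rw [this]
      exact (hg (U n) ih).1
  have himg : ∀ n, f '' Icc (U (n+1)).1 (U (n+1)).2 = Icc (U n).1 (U n).2 := by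
    intro n
    have : U (n+1) = g (U n) := Function.iterate_succ_apply' g n (α, β)
    rw [this]
    exact (hg (U n) (hCU n)).2
  have hUsub : ∀ n, Icc (U n).1 (U n).2 ⊆ Icc 0 1 :=
    fun n => (Icc_subset_Icc (hCU n).1 (hCU n).2.2).trans hAsub
  -- splitting intervals inside [a, b]
  have hab01 : Icc (0:ℝ) 1 ⊆ f '' Icc a b := by
    have := intermediate_value_Icc hab'.le (hf.mono (Icc_subset_Icc ha0 hb1))
    rwa [hfa, hfb] at this
  have hS : ∀ n, ∃ p q : ℝ, a ≤ p ∧ p ≤ q ∧ q ≤ b ∧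
      f '' Icc p q = Icc (U n).1 (U n).2 := by
    intro n
    exact tight_sub f hab'.le (hf.mono (Icc_subset_Icc ha0 hb1)) (hCU n).2.1.le
      (fun x hx => hab01 (hUsub n hx))
  choose sp sq hsp hspq hsq hSimg using hS
  -- assemble the splitting sequence
  apply hns
  refine ⟨fun n => (U (n+1)).1, fun n => (U (n+1)).2, Set.univ,
    fun n => Icc (sp n) (sq n), ?_, ?_, ?_, ?_, ?_, ?_, ?_⟩
  · exact fun n => (hCU (n+1)).2.1.le
  · exact fun n => hUsub (n+1)
  · intro n hEq
    have h1m : (1:ℝ) ∈ Icc (U (n+1)).1 (U (n+1)).2 := by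
      rw [hEq]; exact right_mem_Icc.2 (by norm_num)
    have h0m : (0:ℝ) ∈ Icc (U (n+1)).1 (U (n+1)).2 := by
      rw [hEq]; exact left_mem_Icc.2 (by norm_num)
    have hc1 : (1:ℝ) ≤ β := h1m.2.trans (hCU (n+1)).2.2
    have hc0 : α ≤ 0 := le_trans (hCU (n+1)).1 h0m.1
    rcases hsep with h | h
    · linarith
    · linarith
  · exact fun n => himg (n+1)
  · exact ⟨0, fun n _ => (hCU (n+1)).2.1⟩
  · exact Set.infinite_univ
  · intro n _
    have hsplt : sp n < sq n := by
      rcases lt_or_eq_of_le (hspq n) with h | h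
      · exact h
      · exfalso
        have hu : (U n).1 ∈ Icc (U n).1 (U n).2 := left_mem_Icc.2 (hCU n).2.1.le
        have hv : (U n).2 ∈ Icc (U n).1 (U n).2 := right_mem_Icc.2 (hCU n).2.1.le
        rw [← hSimg n] at hu hv
        obtain ⟨x, hx, hfx⟩ := hu
        obtain ⟨y, hy, hfy⟩ := hv
        have hx' : x = sp n := le_antisymm (h ▸ hx.2) hx.1
        have hy' : y = sp n := le_antisymm (h ▸ hy.2) hy.1
        rw [hx'] at hfx; rw [hy'] at hfy; rw [hfx] at hfy
        exact absurd hfy (ne_of_lt (hCU n).2.1)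
    refine ⟨⟨sp n, sq n, hsplt, rfl⟩, ?_, ?_, ?_⟩
    · exact (Icc_subset_Icc (hsp n) (hsq n)).trans (Icc_subset_Icc ha0 hb1)
    · rintro x ⟨hxS, hxT⟩
      have hxa : a ≤ x := (hsp n).trans hxS.1
      have hxb : x ≤ b := hxS.2.trans (hsq n)
      have hxl : α ≤ x := le_trans (hCU (n+1)).1 hxT.1
      have hxr : x ≤ β := le_trans hxT.2 (hCU (n+1)).2.2
      rcases hsep with h | h
      · right
        have : x = (U (n+1)).2 := le_antisymm hxT.2 (by linarith [(hCU (n+1)).2.2])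
        exact this
      · left
        have : x = (U (n+1)).1 := le_antisymm (by linarith [(hCU (n+1)).1]) hxT.1
        exact this
    · exact (hSimg n).trans (himg n).symm
end

section
/- Let f : [0,1] → [0,1] be continuous and surjective, and suppose there exist three points x_i < x_j < x_k in a single periodic orbit of f such that f(x_j) > max(f(x_i), f(x_k)) or f(x_j) < min(f(x_i), f(x_k)). Then f admits a splitting sequence. -/
open Set Filter Topology

namespace Stmt16Aux


lemma nondeg_of_image {g : ℝ → ℝ} {a b c d : ℝ} (hab : a ≤ b) (hcd : c < d)
    (him : g '' Icc a b = Icc c d) : a < b := by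
  rcases lt_or_eq_of_le hab with h | h
  · exact h
  · exfalso
    subst h
    rw [Icc_self, image_singleton] at him
    have h1 : c ∈ ({g a} : Set ℝ) := him ▸ left_mem_Icc.2 hcd.le
    have h2 : d ∈ ({g a} : Set ℝ) := him ▸ right_mem_Icc.2 hcd.le
    rw [mem_singleton_iff] at h1 h2
    exact absurd (h1.trans h2.symm) hcd.ne

lemma pullback_core (g : ℝ → ℝ) {α β c d : ℝ} (hab : α ≤ β)
    (hg : ContinuousOn g (Icc α β)) (hcd : c < d) (hα : g α = c) (hβ : g β = d) :
    ∃ a' b', α ≤ a' ∧ a' ≤ b' ∧ b' ≤ β ∧ g '' Icc a' b' = Icc c d := by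
  set B : Set ℝ := Icc α β ∩ g ⁻¹' {d} with hB
  have hBclosed : IsClosed B := hg.preimage_isClosed_of_isClosed isClosed_Icc isClosed_singleton
  have hBne : B.Nonempty := ⟨β, right_mem_Icc.2 hab, hβ⟩
  have hBbdd : BddBelow B := ⟨α, fun x hx => hx.1.1⟩
  have hb'B : sInf B ∈ B := hBclosed.csInf_mem hBne hBbdd
  set b' := sInf B with hb'def
  have hb'mem : b' ∈ Icc α β := hb'B.1
  have hgb' : g b' = d := hb'B.2
  set A : Set ℝ := Icc α b' ∩ g ⁻¹' {c} with hA
  have hsubIcc : Icc α b' ⊆ Icc α β := Icc_subset_Icc le_rfl hb'mem.2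
  have hAclosed : IsClosed A :=
    (hg.mono hsubIcc).preimage_isClosed_of_isClosed isClosed_Icc isClosed_singleton
  have hAne : A.Nonempty := ⟨α, left_mem_Icc.2 hb'mem.1, hα⟩
  have hAbdd : BddAbove A := ⟨b', fun x hx => hx.1.2⟩
  have ha'A : sSup A ∈ A := hAclosed.csSup_mem hAne hAbdd
  set a' := sSup A with ha'def
  have ha'mem : a' ∈ Icc α b' := ha'A.1
  have hga' : g a' = c := ha'A.2
  refine ⟨a', b', ha'mem.1, ha'mem.2, hb'mem.2, ?_⟩
  have hsub2 : Icc a' b' ⊆ Icc α β := Icc_subset_Icc ha'mem.1 hb'mem.2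
  apply Subset.antisymm
  · rintro _ ⟨x, hx, rfl⟩
    have hxαβ : x ∈ Icc α β := hsub2 hx
    constructor
    · by_contra h
      push_neg at h
      have hsub3 : Icc x b' ⊆ Icc α β := Icc_subset_Icc hxαβ.1 hb'mem.2
      have hmem : c ∈ Icc (g x) (g b') := ⟨h.le, hgb' ▸ hcd.le⟩
      obtain ⟨y, hy, hgy⟩ := intermediate_value_Icc hx.2 (hg.mono hsub3) hmem
      have hyA : y ∈ A := ⟨⟨le_trans hxαβ.1 hy.1, hy.2⟩, hgy⟩
      have h1 : y ≤ a' := le_csSup hAbdd hyA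
      have h2 : x = y := le_antisymm hy.1 (le_trans h1 hx.1)
      rw [← h2] at hgy
      exact absurd hgy h.ne
    · by_contra h
      push_neg at h
      have hsub3 : Icc a' x ⊆ Icc α β := Icc_subset_Icc ha'mem.1 hxαβ.2
      have hmem : d ∈ Icc (g a') (g x) := ⟨hga' ▸ hcd.le, h.le⟩
      obtain ⟨y, hy, hgy⟩ := intermediate_value_Icc hx.1 (hg.mono hsub3) hmem
      have hyB : y ∈ B := ⟨⟨le_trans ha'mem.1 hy.1, le_trans hy.2 hxαβ.2⟩, hgy⟩
      have h1 : b' ≤ y := csInf_le hBbdd hyB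
      have h2 : x = y := le_antisymm (le_trans hx.2 h1) hy.2
      rw [← h2] at hgy
      exact absurd hgy h.ne'
  · have := intermediate_value_Icc ha'mem.2 (hg.mono hsub2)
    rw [hga', hgb'] at this
    exact this

lemma pullback (g : ℝ → ℝ) {u v c d : ℝ} (huv : u ≤ v)
    (hg : ContinuousOn g (Icc u v)) (hcd : c < d)
    (hc : c ∈ g '' Icc u v) (hd : d ∈ g '' Icc u v) :
    ∃ a b, u ≤ a ∧ a < b ∧ b ≤ v ∧ g '' Icc a b = Icc c d := by
  obtain ⟨α, hαm, hα⟩ := hc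
  obtain ⟨β, hβm, hβ⟩ := hd
  rcases le_total α β with h | h
  · obtain ⟨a, b, h1, h2, h3, h4⟩ :=
      pullback_core g h (hg.mono (Icc_subset_Icc hαm.1 hβm.2)) hcd hα hβ
    exact ⟨a, b, le_trans hαm.1 h1, nondeg_of_image h2 hcd h4, le_trans h3 hβm.2, h4⟩
  · set g2 : ℝ → ℝ := fun x => g (u + v - x) with hg2def
    have key : MapsTo (fun x : ℝ => u + v - x) (Icc u v) (Icc u v) := by
      intro x hx
      simp only [mem_Icc] at hx ⊢
      constructor <;> linarith
    have hg2 : ContinuousOn g2 (Icc u v) :=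
      hg.comp ((continuous_const.sub continuous_id).continuousOn) key
    have hord : u + v - α ≤ u + v - β := by linarith
    have hm1 : u + v - α ∈ Icc u v := key hαm
    have hm2 : u + v - β ∈ Icc u v := key hβm
    have hgα : g2 (u + v - α) = c := by simp [hg2def, hα]
    have hgβ : g2 (u + v - β) = d := by simp [hg2def, hβ]
    obtain ⟨a, b, h1, h2, h3, h4⟩ :=
      pullback_core g2 hord (hg2.mono (Icc_subset_Icc hm1.1 hm2.2)) hcd hgα hgβ
    have himg : g '' Icc (u + v - b) (u + v - a) = Icc c d := by
      have : Icc (u + v - b) (u + v - a) = (fun x : ℝ => (u + v) - x) '' Icc a b :=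
        (image_const_sub_Icc (u + v) a b).symm
      rw [this, image_image]
      exact h4
    refine ⟨u + v - b, u + v - a, by linarith [hm2.2, h3, hβm.1], ?_, by linarith [hm1.1, h1, hαm.2], himg⟩
    have hab : a < b := nondeg_of_image h2 hcd h4
    linarith



variable {f : ℝ → ℝ}

lemma mapsToI (hsurj : f '' Icc 0 1 = Icc 0 1) : MapsTo f (Icc (0:ℝ) 1) (Icc (0:ℝ) 1) :=
  fun x hx => hsurj ▸ mem_image_of_mem f hx

lemma iter_cont (hf : ContinuousOn f (Icc 0 1)) (hsurj : f '' Icc 0 1 = Icc 0 1) :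
    ∀ n, ContinuousOn (f^[n]) (Icc (0:ℝ) 1) := by
  intro n
  induction n with
  | zero => simpa using continuousOn_id
  | succ n ih =>
      rw [Function.iterate_succ]
      exact ih.comp hf (mapsToI hsurj)

lemma iter_image (hsurj : f '' Icc 0 1 = Icc 0 1) :
    ∀ n, f^[n] '' Icc (0:ℝ) 1 = Icc (0:ℝ) 1 := by
  intro n
  induction n with
  | zero => simp
  | succ n ih =>
      rw [Function.iterate_succ', Set.image_comp, ih, hsurj]

lemma image_f_iter (f : ℝ → ℝ) (j : ℕ) (s : Set ℝ) :
    f '' (f^[j] '' s) = f^[j+1] '' s := by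
  rw [Function.iterate_succ', Set.image_comp]

lemma main_lemma (f : ℝ → ℝ) (hf : ContinuousOn f (Icc 0 1)) (hsurj : f '' Icc 0 1 = Icc 0 1)
    (K : ℕ) (hK : 1 ≤ K)
    (u v x₁ x₂ y₁ y₂ : ℝ) (huv : u < v) (hx : x₁ < x₂) (hy : y₁ < y₂)
    (hJI : Icc u v ⊆ Icc 0 1) (hXI : Icc x₁ x₂ ⊆ Icc 0 1) (hYI : Icc y₁ y₂ ⊆ Icc 0 1)
    (hXJ : Icc u v ⊆ f '' Icc x₁ x₂) (hYJ : Icc u v ⊆ f '' Icc y₁ y₂)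
    (hJX : Icc x₁ x₂ ⊆ f^[K] '' Icc u v)
    (hXY : ∀ z, z ∈ Icc x₁ x₂ → z ∈ Icc y₁ y₂ → z = x₁ ∨ z = x₂) :
    SplittingSeq f := by
  have hvI : v ∈ Icc (0:ℝ) 1 := hJI ⟨huv.le, le_rfl⟩
  set Q : ℝ × ℝ → Prop := fun E => E.1 < E.2 ∧ Icc E.1 E.2 ⊆ Icc u v with hQdef
  have step : ∀ E : {E : ℝ × ℝ // Q E}, ∃ E' : {E : ℝ × ℝ // Q E},
      f^[K] '' Icc E'.1.1 E'.1.2 ⊆ Icc x₁ x₂ ∧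
      f^[K+1] '' Icc E'.1.1 E'.1.2 = Icc E.1.1 E.1.2 := by
    rintro ⟨⟨c, d⟩, hcd, hsubJ⟩
    obtain ⟨p₁, p₂, hp1, hp12, hp2, hpim⟩ :=
      pullback f hx.le (hf.mono hXI) hcd
        (hXJ (hsubJ (left_mem_Icc.2 hcd.le))) (hXJ (hsubJ (right_mem_Icc.2 hcd.le)))
    have hp1X : p₁ ∈ Icc x₁ x₂ := ⟨hp1, le_trans hp12.le hp2⟩
    have hp2X : p₂ ∈ Icc x₁ x₂ := ⟨le_trans hp1 hp12.le, hp2⟩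
    obtain ⟨e₁, e₂, he1, he12, he2, heim⟩ :=
      pullback (f^[K]) huv.le ((iter_cont hf hsurj K).mono hJI) hp12 (hJX hp1X) (hJX hp2X)
    refine ⟨⟨(e₁, e₂), he12, Icc_subset_Icc he1 he2⟩, ?_, ?_⟩
    · rw [heim]; exact Icc_subset_Icc hp1 hp2
    · rw [Function.iterate_succ', Set.image_comp, heim, hpim]
  choose next hn1 hn2 using step
  have hE0Q : Q (u, (u+v)/2) := ⟨by dsimp; linarith, by dsimp; exact Icc_subset_Icc le_rfl (by linarith)⟩
  set E0 : {E : ℝ × ℝ // Q E} := ⟨(u, (u+v)/2), hE0Q⟩ with hE0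
  set seq : ℕ → {E : ℝ × ℝ // Q E} := fun n => next^[n] E0 with hseq
  have hseqsucc : ∀ s, seq (s+1) = next (seq s) := fun s => Function.iterate_succ_apply' next s E0
  have hQs : ∀ s, (seq s).1.1 < (seq s).1.2 ∧ Icc (seq s).1.1 (seq s).1.2 ⊆ Icc u v :=
    fun s => (seq s).2
  set R : ℕ → ℕ × ℕ := fun n =>
    Nat.rec ((0:ℕ), (0:ℕ)) (fun _ st => if st.1 = 0 then (K, st.2 + 1) else (st.1 - 1, st.2)) n
    with hRdef
  have hR0 : R 0 = (0, 0) := rfl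
  have hRsucc : ∀ n, R (n+1) =
      if (R n).1 = 0 then (K, (R n).2 + 1) else ((R n).1 - 1, (R n).2) := fun n => rfl
  have hexp : ∀ n, (R n).1 ≤ K := by
    intro n
    induction n with
    | zero => simp [hR0]
    | succ n ih =>
        rw [hRsucc]
        split
        · exact le_rfl
        · omega
  set T : ℕ → Set ℝ := fun n => f^[(R n).1] '' Icc (seq (R n).2).1.1 (seq (R n).2).1.2 with hT
  have hTI : ∀ n, T n ⊆ Icc 0 1 := by
    intro n
    have h1 : Icc (seq (R n).2).1.1 (seq (R n).2).1.2 ⊆ Icc 0 1 := ((hQs _).2).trans hJI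
    calc T n ⊆ f^[(R n).1] '' Icc 0 1 := image_mono h1
      _ = Icc 0 1 := iter_image hsurj _
  have hTstep : ∀ n, f '' T (n+1) = T n := by
    intro n
    by_cases h : (R n).1 = 0
    · have hR' : R (n+1) = (K, (R n).2 + 1) := by rw [hRsucc, if_pos h]
      simp only [hT, hR', h]
      rw [image_f_iter, hseqsucc]
      simp only [Function.iterate_zero, image_id]
      exact hn2 (seq (R n).2)
    · obtain ⟨j, hj⟩ := Nat.exists_eq_succ_of_ne_zero h
      have hR' : R (n+1) = (j, (R n).2) := by
        rw [hRsucc, if_neg h, hj]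
        simp
      simp only [hT, hR', hj]
      rw [image_f_iter]
  -- block starts
  have hcyc : ∀ s n, R n = (K, s) → ∀ j, j ≤ K → R (n + j) = (K - j, s) := by
    intro s n hn j
    induction j with
    | zero => intro _; simpa using hn
    | succ j ih =>
        intro hjK
        have h1 := ih (by omega)
        have h2 : K - j ≠ 0 := by omega
        have h3 : R (n + j + 1) = (K - (j+1), s) := by
          rw [hRsucc, h1, if_neg h2]
          simp [Nat.sub_sub]
        exact h3
  have hblockpos : ∀ s, R (s*(K+1) + 1) = (K, s+1) := by
    intro s
    induction s with
    | zero =>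
        have h := hRsucc 0
        rw [hR0] at h
        simpa using h
    | succ s ih =>
        have h1 := hcyc (s+1) (s*(K+1)+1) ih K le_rfl
        have h2 := hRsucc (s*(K+1)+1+K)
        rw [h1] at h2
        simp at h2
        have h3 : (s+1)*(K+1)+1 = s*(K+1)+1+K+1 := by ring
        rw [h3, h2]
  have hT0 : T 0 = Icc u ((u+v)/2) := by
    simp only [hT, hR0]
    simp [hseq, hE0]
  have hTne : ∀ n, T n ≠ Icc 0 1 := by
    have key : ∀ n, T n = Icc 0 1 → T 0 = Icc 0 1 := by
      intro n
      induction n with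
      | zero => exact id
      | succ n ih => intro h; exact ih (by rw [← hTstep n, h, hsurj])
    intro n h
    have h0 := key n h
    rw [hT0] at h0
    have h1 : (1:ℝ) ∈ Icc u ((u+v)/2) := h0 ▸ right_mem_Icc.2 zero_le_one
    have h2 := h1.2
    have hv1 : v ≤ 1 := hvI.2
    linarith
  have hTnondeg : ∀ n, ¬ (T n).Subsingleton := by
    have key : ∀ n, (T n).Subsingleton → (T 0).Subsingleton := by
      intro n
      induction n with
      | zero => exact id
      | succ n ih => intro h; exact ih (by rw [← hTstep n]; exact h.image f)
    intro n h
    have h0 := key n h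
    rw [hT0] at h0
    have : u = (u+v)/2 :=
      h0 (left_mem_Icc.2 (by linarith)) (right_mem_Icc.2 (by linarith))
    linarith
  set l : ℕ → ℝ := fun n => sInf (T n) with hl
  set r : ℕ → ℝ := fun n => sSup (T n) with hr
  have hTIcc : ∀ n, T n = Icc (l n) (r n) := by
    intro n
    have hsub : Icc (seq (R n).2).1.1 (seq (R n).2).1.2 ⊆ Icc 0 1 := ((hQs _).2).trans hJI
    have h1 := ContinuousOn.image_Icc (hQs (R n).2).1.le
      ((iter_cont hf hsurj (R n).1).mono hsub)
    simp only [hT, hl, hr]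
    exact h1
  have hlr : ∀ n, l n < r n := by
    intro n
    by_contra h
    push_neg at h
    apply hTnondeg n
    rw [hTIcc n]
    intro a ha b hb
    have := ha.1; have := ha.2; have := hb.1; have := hb.2
    linarith
  set N : Set ℕ := range (fun s : ℕ => s*(K+1)+1) with hN
  have hNinf : N.Infinite := by
    apply Set.infinite_range_of_injective
    intro a b hab
    simp only at hab
    have : a * (K+1) = b * (K+1) := by omega
    exact Nat.eq_of_mul_eq_mul_right (by omega) this
  have hsplit : ∀ n, ∃ Sn : Set ℝ, n ∈ N →
      ((∃ a b : ℝ, a < b ∧ Sn = Icc a b) ∧ Sn ⊆ Icc 0 1 ∧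
        Sn ∩ Icc (l n) (r n) ⊆ {l n, r n} ∧ f '' Sn = f '' Icc (l n) (r n)) := by
    intro n
    by_cases hn : n ∈ N
    swap
    · exact ⟨∅, fun h => absurd h hn⟩
    obtain ⟨s, hs⟩ := hn
    simp only at hs
    have hRn : R n = (K, s+1) := by rw [← hs]; exact hblockpos s
    have hTn : T n = f^[K] '' Icc (seq (s+1)).1.1 (seq (s+1)).1.2 := by
      simp only [hT, hRn]
    have hTX : T n ⊆ Icc x₁ x₂ := by
      rw [hTn, hseqsucc]; exact hn1 (seq s)
    have hfT : f '' T n = Icc (seq s).1.1 (seq s).1.2 := by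
      rw [hTn, image_f_iter, hseqsucc]
      exact hn2 (seq s)
    obtain ⟨a, b, hya, hab, hyb, him⟩ := pullback f hy.le (hf.mono hYI) (hQs s).1
      (hYJ ((hQs s).2 (left_mem_Icc.2 (hQs s).1.le)))
      (hYJ ((hQs s).2 (right_mem_Icc.2 (hQs s).1.le)))
    refine ⟨Icc a b, fun _ => ⟨⟨a, b, hab, rfl⟩, (Icc_subset_Icc hya hyb).trans hYI, ?_, ?_⟩⟩
    · intro z hz
      have hzY : z ∈ Icc y₁ y₂ := Icc_subset_Icc hya hyb hz.1
      have hzT : z ∈ Icc (l n) (r n) := hz.2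
      have hzX : z ∈ Icc x₁ x₂ := hTX (by rw [hTIcc n]; exact hzT)
      have hlX : l n ∈ Icc x₁ x₂ := hTX (by rw [hTIcc n]; exact left_mem_Icc.2 (hlr n).le)
      have hrX : r n ∈ Icc x₁ x₂ := hTX (by rw [hTIcc n]; exact right_mem_Icc.2 (hlr n).le)
      rcases hXY z hzX hzY with h | h
      · left
        exact le_antisymm (by rw [h]; exact hlX.1) hzT.1
      · right
        exact le_antisymm hzT.2 (by rw [h]; exact hrX.2)
    · rw [← hTIcc n, hfT]
      exact him
  choose SS hSS using hsplit
  refine ⟨l, r, N, SS, fun n => (hlr n).le, fun n => by rw [← hTIcc n]; exact hTI n,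
    fun n => by rw [← hTIcc n]; exact hTne n,
    fun n => by rw [← hTIcc n, ← hTIcc (n+1)]; exact hTstep n,
    ⟨0, fun n _ => hlr n⟩, hNinf, fun n hn => hSS n hn⟩


end Stmt16Aux

open Stmt16Aux in
theorem stmt_16 (f : ℝ → ℝ) (hf : ContinuousOn f (Icc 0 1))
    (hsurj : f '' Icc 0 1 = Icc 0 1)
    (p : ℝ) (hp : p ∈ Icc (0:ℝ) 1) (m : ℕ) (hm : 0 < m)
    (hper : f^[m] p = p) (hminper : ∀ j, 0 < j → j < m → f^[j] p ≠ p)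
    (i j k : ℕ) (hi : i < m) (hj : j < m) (hk : k < m)
    (hij : f^[i] p < f^[j] p) (hjk : f^[j] p < f^[k] p)
    (hcrit : max (f (f^[i] p)) (f (f^[k] p)) < f (f^[j] p) ∨
             f (f^[j] p) < min (f (f^[i] p)) (f (f^[k] p))) :
    SplittingSeq f := by
  have hItI : ∀ t : ℕ, f^[t] p ∈ Icc (0:ℝ) 1 := by
    intro t
    induction t with
    | zero => simpa using hp
    | succ t ih => rw [Function.iterate_succ_apply']; exact mapsToI hsurj ih
  have haI : f^[i] p ∈ Icc (0:ℝ) 1 := hItI i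
  have hbI : f^[j] p ∈ Icc (0:ℝ) 1 := hItI j
  have hcI : f^[k] p ∈ Icc (0:ℝ) 1 := hItI k
  have hfaI : f (f^[i] p) ∈ Icc (0:ℝ) 1 := mapsToI hsurj haI
  have hfbI : f (f^[j] p) ∈ Icc (0:ℝ) 1 := mapsToI hsurj hbI
  have hfcI : f (f^[k] p) ∈ Icc (0:ℝ) 1 := mapsToI hsurj hcI
  have hm2 : 2 ≤ m := by
    by_contra h
    push_neg at h
    have hi0 : i = 0 := by omega
    have hj0 : j = 0 := by omega
    rw [hi0, hj0] at hij
    exact lt_irrefl _ hij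
  have hKm : (m - 1) + 1 = m := by omega
  have hK1 : 1 ≤ m - 1 := by omega
  have hret : ∀ t : ℕ, f^[m-1] (f (f^[t] p)) = f^[t] p := by
    intro t
    have h1 : f^[m-1] (f (f^[t] p)) = f^[m] (f^[t] p) := by
      rw [← Function.iterate_succ_apply f (m-1) (f^[t] p)]
      congr 1
    rw [h1, ← Function.iterate_add_apply, Nat.add_comm m t, Function.iterate_add_apply, hper]
  rcases hcrit with hcrit | hcrit
  · have hfab : f (f^[i] p) < f (f^[j] p) := lt_of_le_of_lt (le_max_left _ _) hcrit
    have hfcb : f (f^[k] p) < f (f^[j] p) := lt_of_le_of_lt (le_max_right _ _) hcrit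
    rcases le_total (f (f^[i] p)) (f (f^[k] p)) with hac | hac
    · -- J = [f c, f b], X = [b, c], Y = [a, b]
      have hJI : Icc (f (f^[k] p)) (f (f^[j] p)) ⊆ Icc (0:ℝ) 1 := Icc_subset_Icc hfcI.1 hfbI.2
      have hXI : Icc (f^[j] p) (f^[k] p) ⊆ Icc (0:ℝ) 1 := Icc_subset_Icc hbI.1 hcI.2
      have hYI : Icc (f^[i] p) (f^[j] p) ⊆ Icc (0:ℝ) 1 := Icc_subset_Icc haI.1 hbI.2
      refine main_lemma f hf hsurj (m-1) hK1 _ _ _ _ _ _ hfcb hjk hij hJI hXI hYI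
        (intermediate_value_Icc' hjk.le (hf.mono hXI))
        ((Icc_subset_Icc hac le_rfl).trans (intermediate_value_Icc hij.le (hf.mono hYI))) ?_ ?_
      · have hconn : IsPreconnected (f^[m-1] '' Icc (f (f^[k] p)) (f (f^[j] p))) :=
          isPreconnected_Icc.image _ ((iter_cont hf hsurj (m-1)).mono hJI)
        exact hconn.Icc_subset ⟨f (f^[j] p), right_mem_Icc.2 hfcb.le, hret j⟩
          ⟨f (f^[k] p), left_mem_Icc.2 hfcb.le, hret k⟩
      · intro z hz1 hz2
        exact Or.inl (le_antisymm hz2.2 hz1.1)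
    · -- J = [f a, f b], X = [a, b], Y = [b, c]
      have hJI : Icc (f (f^[i] p)) (f (f^[j] p)) ⊆ Icc (0:ℝ) 1 := Icc_subset_Icc hfaI.1 hfbI.2
      have hXI : Icc (f^[i] p) (f^[j] p) ⊆ Icc (0:ℝ) 1 := Icc_subset_Icc haI.1 hbI.2
      have hYI : Icc (f^[j] p) (f^[k] p) ⊆ Icc (0:ℝ) 1 := Icc_subset_Icc hbI.1 hcI.2
      refine main_lemma f hf hsurj (m-1) hK1 _ _ _ _ _ _ hfab hij hjk hJI hXI hYI
        (intermediate_value_Icc hij.le (hf.mono hXI))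
        ((Icc_subset_Icc hac le_rfl).trans (intermediate_value_Icc' hjk.le (hf.mono hYI))) ?_ ?_
      · have hconn : IsPreconnected (f^[m-1] '' Icc (f (f^[i] p)) (f (f^[j] p))) :=
          isPreconnected_Icc.image _ ((iter_cont hf hsurj (m-1)).mono hJI)
        exact hconn.Icc_subset ⟨f (f^[i] p), left_mem_Icc.2 hfab.le, hret i⟩
          ⟨f (f^[j] p), right_mem_Icc.2 hfab.le, hret j⟩
      · intro z hz1 hz2
        exact Or.inr (le_antisymm hz1.2 hz2.1)
  · have hfba : f (f^[j] p) < f (f^[i] p) := lt_of_lt_of_le hcrit (min_le_left _ _)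
    have hfbc : f (f^[j] p) < f (f^[k] p) := lt_of_lt_of_le hcrit (min_le_right _ _)
    rcases le_total (f (f^[i] p)) (f (f^[k] p)) with hac | hac
    · -- J = [f b, f a], X = [a, b], Y = [b, c]
      have hJI : Icc (f (f^[j] p)) (f (f^[i] p)) ⊆ Icc (0:ℝ) 1 := Icc_subset_Icc hfbI.1 hfaI.2
      have hXI : Icc (f^[i] p) (f^[j] p) ⊆ Icc (0:ℝ) 1 := Icc_subset_Icc haI.1 hbI.2
      have hYI : Icc (f^[j] p) (f^[k] p) ⊆ Icc (0:ℝ) 1 := Icc_subset_Icc hbI.1 hcI.2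
      refine main_lemma f hf hsurj (m-1) hK1 _ _ _ _ _ _ hfba hij hjk hJI hXI hYI
        (intermediate_value_Icc' hij.le (hf.mono hXI))
        ((Icc_subset_Icc le_rfl hac).trans (intermediate_value_Icc hjk.le (hf.mono hYI))) ?_ ?_
      · have hconn : IsPreconnected (f^[m-1] '' Icc (f (f^[j] p)) (f (f^[i] p))) :=
          isPreconnected_Icc.image _ ((iter_cont hf hsurj (m-1)).mono hJI)
        exact hconn.Icc_subset ⟨f (f^[i] p), right_mem_Icc.2 hfba.le, hret i⟩
          ⟨f (f^[j] p), left_mem_Icc.2 hfba.le, hret j⟩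
      · intro z hz1 hz2
        exact Or.inr (le_antisymm hz1.2 hz2.1)
    · -- J = [f b, f c], X = [b, c], Y = [a, b]
      have hJI : Icc (f (f^[j] p)) (f (f^[k] p)) ⊆ Icc (0:ℝ) 1 := Icc_subset_Icc hfbI.1 hfcI.2
      have hXI : Icc (f^[j] p) (f^[k] p) ⊆ Icc (0:ℝ) 1 := Icc_subset_Icc hbI.1 hcI.2
      have hYI : Icc (f^[i] p) (f^[j] p) ⊆ Icc (0:ℝ) 1 := Icc_subset_Icc haI.1 hbI.2
      refine main_lemma f hf hsurj (m-1) hK1 _ _ _ _ _ _ hfbc hjk hij hJI hXI hYI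
        (intermediate_value_Icc hjk.le (hf.mono hXI))
        ((Icc_subset_Icc le_rfl hac).trans (intermediate_value_Icc' hij.le (hf.mono hYI))) ?_ ?_
      · have hconn : IsPreconnected (f^[m-1] '' Icc (f (f^[j] p)) (f (f^[k] p))) :=
          isPreconnected_Icc.image _ ((iter_cont hf hsurj (m-1)).mono hJI)
        exact hconn.Icc_subset ⟨f (f^[j] p), left_mem_Icc.2 hfbc.le, hret j⟩
          ⟨f (f^[k] p), right_mem_Icc.2 hfbc.le, hret k⟩
      · intro z hz1 hz2
        exact Or.inl (le_antisymm hz2.2 hz1.1)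
end

section
/- Let f : [0,1] → [0,1] be continuous and surjective, and suppose x_0 is a periodic point of period m > 2 with orbit x_0 < all other orbit points (x_0 is the minimum of its orbit). Then, writing x_i = f^i(x_0), we have x_1 > x_0 and f(x_{m-1}) = x_0 < x_1, and there exist indices i, j, k with x_i < x_j < x_k all in the orbit such that f(x_j) is either greater than both f(x_i) and f(x_k), or less than both. -/
open Set Filter Topology

theorem stmt_17 (f : ℝ → ℝ) (hf : ContinuousOn f (Icc 0 1))
    (hsurj : f '' Icc 0 1 = Icc 0 1)
    (x₀ : ℝ) (hx₀ : x₀ ∈ Icc (0:ℝ) 1) (m : ℕ) (hm : 2 < m)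
    (hper : f^[m] x₀ = x₀) (hminper : ∀ j, 0 < j → j < m → f^[j] x₀ ≠ x₀)
    (hmin : ∀ j, 0 < j → j < m → x₀ < f^[j] x₀) :
    x₀ < f x₀ ∧ f (f^[m-1] x₀) = x₀ ∧
    ∃ i j k : ℕ, i < m ∧ j < m ∧ k < m ∧
      f^[i] x₀ < f^[j] x₀ ∧ f^[j] x₀ < f^[k] x₀ ∧
      ((f (f^[i] x₀) < f (f^[j] x₀) ∧ f (f^[k] x₀) < f (f^[j] x₀)) ∨
       (f (f^[j] x₀) < f (f^[i] x₀) ∧ f (f^[j] x₀) < f (f^[k] x₀))) := by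
  have hm0 : 0 < m := by omega
  have hgsucc : ∀ j : ℕ, f (f^[j] x₀) = f^[j+1] x₀ := by
    intro j; rw [Function.iterate_succ_apply']
  have hgm : f^[m] x₀ = f^[0] x₀ := by simpa using hper
  have hinj : ∀ a b : ℕ, a < m → b < m → f^[a] x₀ = f^[b] x₀ → a = b := by
    intro a b ha hb hab
    by_contra hne
    wlog h : a < b generalizing a b
    · exact this b a hb ha hab.symm (Ne.symm hne) (by omega)
    · have h1 : f^[m - b] (f^[b] x₀) = x₀ := by
        rw [← Function.iterate_add_apply, show m - b + b = m by omega]; exact hper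
      rw [← hab, ← Function.iterate_add_apply] at h1
      exact hminper (m - b + a) (by omega) (by omega) h1
  have hmin' : ∀ j : ℕ, 0 < j → j < m → f^[0] x₀ < f^[j] x₀ := by
    intro j h1 h2; simpa using hmin j h1 h2
  obtain ⟨c, hcmem, hcmax⟩ := (Finset.range m).exists_max_image (fun j => f^[j] x₀)
    ⟨0, Finset.mem_range.mpr hm0⟩
  have hc : c < m := Finset.mem_range.mp hcmem
  have hmax : ∀ j : ℕ, j < m → f^[j] x₀ ≤ f^[c] x₀ := by
    intro j hj; exact hcmax j (Finset.mem_range.mpr hj)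
  have hc0 : c ≠ 0 := by
    intro h0
    have := hmin' 1 one_pos (by omega)
    have := hmax 1 (by omega)
    rw [h0] at this
    linarith
  refine ⟨by simpa using hmin 1 one_pos (by omega), ?_, ?_⟩
  · rw [hgsucc (m-1), show m - 1 + 1 = m by omega]; exact hper
  · by_cases hp : c = 1
    · -- p = 0 case : f x₀ is the orbit maximum; use (0, m-1, 1)
      refine ⟨0, m - 1, 1, by omega, by omega, by omega, ?_, ?_, Or.inr ⟨?_, ?_⟩⟩
      · exact hmin' (m-1) (by omega) (by omega)
      · have hle : f^[m-1] x₀ ≤ f^[c] x₀ := hmax (m-1) (by omega)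
        have hne : f^[m-1] x₀ ≠ f^[c] x₀ := fun h => by
          have := hinj (m-1) c (by omega) hc h; omega
        rw [hp] at hle hne
        exact lt_of_le_of_ne hle hne
      · rw [hgsucc (m-1), show m - 1 + 1 = m by omega, hper, hgsucc 0]
        exact hmin' 1 one_pos (by omega)
      · rw [hgsucc (m-1), show m - 1 + 1 = m by omega, hper, hgsucc 1]
        exact hmin 2 (by omega) (by omega)
    · -- p = c - 1 > 0 : use (0, c-1, c)
      have hc2 : 2 ≤ c := by omega
      refine ⟨0, c - 1, c, by omega, by omega, hc, ?_, ?_, Or.inl ⟨?_, ?_⟩⟩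
      · exact hmin' (c-1) (by omega) (by omega)
      · have hle : f^[c-1] x₀ ≤ f^[c] x₀ := hmax (c-1) (by omega)
        have hne : f^[c-1] x₀ ≠ f^[c] x₀ := fun h => by
          have := hinj (c-1) c (by omega) hc h; omega
        exact lt_of_le_of_ne hle hne
      · rw [hgsucc 0, hgsucc (c-1), show c - 1 + 1 = c by omega]
        have hle : f^[1] x₀ ≤ f^[c] x₀ := hmax 1 (by omega)
        have hne : f^[1] x₀ ≠ f^[c] x₀ := fun h => by
          have := hinj 1 c (by omega) hc h; omega
        exact lt_of_le_of_ne hle hne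
      · rw [hgsucc c, hgsucc (c-1), show c - 1 + 1 = c by omega]
        rcases eq_or_lt_of_le (Nat.succ_le_of_lt hc) with h | h
        · rw [show c + 1 = m from h, hper]
          exact hmin c (by omega) hc
        · have hle : f^[c+1] x₀ ≤ f^[c] x₀ := hmax (c+1) h
          have hne : f^[c+1] x₀ ≠ f^[c] x₀ := fun hh => by
            have := hinj (c+1) c h hc hh; omega
          exact lt_of_le_of_ne hle hne
end

section
/- Let f : [0,1] → [0,1] be continuous, surjective, and not admitting a splitting sequence, with at least two fixed points, and let d be an accumulation point of the set F of fixed points of f. Then the inverse limit Lf = {(x_n) ∈ [0,1]^ℕ : f(x_{n+1}) = x_n} decomposes as Lf = L([0,d]) ∪ L([d,1]), where L(J) = {(x_n) ∈ Lf : x_n ∈ J for all n}, and L([0,d]) ∩ L([d,1]) = {(d, d, d, …)}. -/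
open Set Filter Topology

lemma core_exact (f : ℝ → ℝ) {p q α β : ℝ} (hf : ContinuousOn f (Icc p q)) (hpq : p ≤ q)
    (hfp : f p = α) (hfq : f q = β) :
    ∃ u v, p ≤ u ∧ u ≤ v ∧ v ≤ q ∧ f '' Icc u v = uIcc α β := by
  have hSbcl : IsClosed (Icc p q ∩ f ⁻¹' {β}) :=
    hf.preimage_isClosed_of_isClosed isClosed_Icc isClosed_singleton
  have hSbne : (Icc p q ∩ f ⁻¹' {β}).Nonempty := ⟨q, ⟨hpq, le_refl q⟩, hfq⟩
  have hSbbd : BddBelow (Icc p q ∩ f ⁻¹' {β}) := ⟨p, fun t ht => ht.1.1⟩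
  set b' := sInf (Icc p q ∩ f ⁻¹' {β}) with hb'def
  have hb' : b' ∈ Icc p q ∩ f ⁻¹' {β} := hSbcl.csInf_mem hSbne hSbbd
  have hfb' : f b' = β := hb'.2
  have hb'min : ∀ s, s ∈ Icc p q → f s = β → b' ≤ s := fun s hs hfs =>
    csInf_le hSbbd ⟨hs, hfs⟩
  have hfm : ContinuousOn f (Icc p b') := hf.mono (Icc_subset_Icc le_rfl hb'.1.2)
  have hSacl : IsClosed (Icc p b' ∩ f ⁻¹' {α}) :=
    hfm.preimage_isClosed_of_isClosed isClosed_Icc isClosed_singleton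
  have hSane : (Icc p b' ∩ f ⁻¹' {α}).Nonempty := ⟨p, ⟨le_refl p, hb'.1.1⟩, hfp⟩
  have hSabd : BddAbove (Icc p b' ∩ f ⁻¹' {α}) := ⟨b', fun t ht => ht.1.2⟩
  set a' := sSup (Icc p b' ∩ f ⁻¹' {α}) with ha'def
  have ha' : a' ∈ Icc p b' ∩ f ⁻¹' {α} := hSacl.csSup_mem hSane hSabd
  have hfa' : f a' = α := ha'.2
  have ha'max : ∀ s, s ∈ Icc p b' → f s = α → s ≤ a' := fun s hs hfs =>
    le_csSup hSabd ⟨hs, hfs⟩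
  have hab : a' ≤ b' := ha'.1.2
  have hpa' : p ≤ a' := ha'.1.1
  have hb'q : b' ≤ q := hb'.1.2
  refine ⟨a', b', hpa', hab, hb'q, ?_⟩
  apply Subset.antisymm
  · rintro y ⟨t, ht, rfl⟩
    have hhigh : f t ≤ α ⊔ β := by
      by_contra hcon
      push_neg at hcon
      rcases le_total α β with hord | hord
      · have htb : t < b' := by
          rcases lt_or_eq_of_le ht.2 with h | h
          · exact h
          · rw [h, hfb'] at hcon; exact absurd (le_sup_right (a := α)) (not_le.2 hcon)
        have hmem : β ∈ Icc (f a') (f t) :=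
          ⟨by rw [hfa']; exact hord, le_of_lt (lt_of_le_of_lt le_sup_right hcon)⟩
        obtain ⟨s, hs, hfs⟩ := intermediate_value_Icc ht.1
          (hf.mono (Icc_subset_Icc hpa' (le_trans ht.2 hb'q))) hmem
        have := hb'min s ⟨le_trans hpa' hs.1, le_trans hs.2 (le_trans ht.2 hb'q)⟩ hfs
        linarith [hs.2]
      · have hta : a' < t := by
          rcases lt_or_eq_of_le ht.1 with h | h
          · exact h
          · rw [← h, hfa'] at hcon; exact absurd (le_sup_left (b := β)) (not_le.2 hcon)
        have hmem : α ∈ Icc (f b') (f t) :=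
          ⟨by rw [hfb']; exact hord, le_of_lt (lt_of_le_of_lt le_sup_left hcon)⟩
        obtain ⟨s, hs, hfs⟩ := intermediate_value_Icc' ht.2
          (hf.mono (Icc_subset_Icc (le_trans hpa' ht.1) hb'q)) hmem
        have := ha'max s ⟨le_trans hpa' (le_trans ht.1 hs.1), hs.2⟩ hfs
        linarith [hs.1]
    have hlow : α ⊓ β ≤ f t := by
      by_contra hcon
      push_neg at hcon
      rcases le_total α β with hord | hord
      · have hta : a' < t := by
          rcases lt_or_eq_of_le ht.1 with h | h
          · exact h
          · rw [← h, hfa'] at hcon; exact absurd (inf_le_left (b := β)) (not_le.2 hcon)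
        have hmem : α ∈ Icc (f t) (f b') :=
          ⟨le_of_lt (lt_of_lt_of_le hcon inf_le_left), by rw [hfb']; exact hord⟩
        obtain ⟨s, hs, hfs⟩ := intermediate_value_Icc ht.2
          (hf.mono (Icc_subset_Icc (le_trans hpa' ht.1) hb'q)) hmem
        have := ha'max s ⟨le_trans hpa' (le_trans ht.1 hs.1), hs.2⟩ hfs
        linarith [hs.1]
      · have htb : t < b' := by
          rcases lt_or_eq_of_le ht.2 with h | h
          · exact h
          · rw [h, hfb'] at hcon; exact absurd (inf_le_right (a := α)) (not_le.2 hcon)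
        have hmem : β ∈ Icc (f t) (f a') :=
          ⟨le_of_lt (lt_of_lt_of_le hcon inf_le_right), by rw [hfa']; exact hord⟩
        obtain ⟨s, hs, hfs⟩ := intermediate_value_Icc' ht.1
          (hf.mono (Icc_subset_Icc hpa' (le_trans ht.2 hb'q))) hmem
        have := hb'min s ⟨le_trans hpa' hs.1, le_trans hs.2 (le_trans ht.2 hb'q)⟩ hfs
        linarith [hs.2]
    exact ⟨hlow, hhigh⟩
  · have h1 : uIcc (f a') (f b') ⊆ f '' uIcc a' b' :=
      intermediate_value_uIcc (by rw [uIcc_of_le hab]; exact hf.mono (Icc_subset_Icc hpa' hb'q) : ContinuousOn f (uIcc a' b'))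
    rw [uIcc_of_le hab, hfa', hfb'] at h1
    exact h1

lemma exact_sub (f : ℝ → ℝ) {a b k1 k2 : ℝ} (hab : a ≤ b) (hf : ContinuousOn f (Icc a b))
    (h12 : k1 ≤ k2) (hK : Icc k1 k2 ⊆ f '' Icc a b) :
    ∃ u v, a ≤ u ∧ u ≤ v ∧ v ≤ b ∧ f '' Icc u v = Icc k1 k2 := by
  obtain ⟨p, hp, hfp⟩ := hK ⟨le_refl k1, h12⟩
  obtain ⟨q, hq, hfq⟩ := hK ⟨h12, le_refl k2⟩
  rcases le_total p q with hpq | hqp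
  · obtain ⟨u, v, h1, h2, h3, h4⟩ := core_exact f
      (hf.mono (Icc_subset_Icc hp.1 hq.2)) hpq hfp hfq
    exact ⟨u, v, le_trans hp.1 h1, h2, le_trans h3 hq.2, by rwa [uIcc_of_le h12] at h4⟩
  · obtain ⟨u, v, h1, h2, h3, h4⟩ := core_exact f
      (hf.mono (Icc_subset_Icc hq.1 hp.2)) hqp hfq hfp
    refine ⟨u, v, le_trans hq.1 h1, h2, le_trans h3 hp.2, ?_⟩
    rwa [uIcc_comm, uIcc_of_le h12] at h4


open Classical in
noncomputable def Tseq (f : ℝ → ℝ) (c c' : ℝ) : ℕ → ℝ × ℝ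
  | 0 => (c, c')
  | n + 1 =>
    if h : ∃ u v, c ≤ u ∧ u ≤ v ∧ v ≤ c' ∧
        f '' Icc u v = Icc (Tseq f c c' n).1 (Tseq f c c' n).2 then
      (h.choose, h.choose_spec.choose)
    else (c, c')


lemma Tseq_props {f : ℝ → ℝ} {c c' : ℝ} (hcc : c < c') (h0 : (0:ℝ) ≤ c) (h1 : c' ≤ 1)
    (hf : ContinuousOn f (Icc 0 1)) (hfc : f c = c) (hfc' : f c' = c') :
    (∀ n, c ≤ (Tseq f c c' n).1 ∧ (Tseq f c c' n).1 < (Tseq f c c' n).2 ∧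
        (Tseq f c c' n).2 ≤ c') ∧
    (∀ n, f '' Icc (Tseq f c c' (n+1)).1 (Tseq f c c' (n+1)).2 =
        Icc (Tseq f c c' n).1 (Tseq f c c' n).2) := by
  have hcont : ContinuousOn f (Icc c c') := hf.mono (Icc_subset_Icc h0 h1)
  have honto : Icc c c' ⊆ f '' Icc c c' := by
    have := intermediate_value_Icc (le_of_lt hcc) hcont
    rwa [hfc, hfc'] at this
  have key : ∀ n, (c ≤ (Tseq f c c' n).1 ∧ (Tseq f c c' n).1 ≤ (Tseq f c c' n).2 ∧
      (Tseq f c c' n).2 ≤ c') →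
      ∃ u v, c ≤ u ∧ u ≤ v ∧ v ≤ c' ∧
        f '' Icc u v = Icc (Tseq f c c' n).1 (Tseq f c c' n).2 := by
    intro n hn
    exact exact_sub f (le_of_lt hcc) hcont hn.2.1
      (subset_trans (Icc_subset_Icc hn.1 hn.2.2) honto)
  have main : ∀ n, c ≤ (Tseq f c c' n).1 ∧ (Tseq f c c' n).1 < (Tseq f c c' n).2 ∧
      (Tseq f c c' n).2 ≤ c' := by
    intro n
    induction n with
    | zero => exact ⟨le_refl c, hcc, le_refl c'⟩
    | succ n ih =>
      have h := key n ⟨ih.1, le_of_lt ih.2.1, ih.2.2⟩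
      have e : Tseq f c c' (n+1) = (h.choose, h.choose_spec.choose) := by
        rw [Tseq, dif_pos h]
      obtain ⟨hcu, huv, hvc, himg⟩ := h.choose_spec.choose_spec
      rw [e]
      refine ⟨hcu, ?_, hvc⟩
      rcases lt_or_eq_of_le huv with h' | h'
      · exact h'
      · exfalso
        rw [← h', Icc_self, image_singleton] at himg
        have e1 : (Tseq f c c' n).1 ∈ ({f h.choose} : Set ℝ) := by
          rw [himg]; exact ⟨le_refl _, le_of_lt ih.2.1⟩
        have e2 : (Tseq f c c' n).2 ∈ ({f h.choose} : Set ℝ) := by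
          rw [himg]; exact ⟨le_of_lt ih.2.1, le_refl _⟩
        rw [mem_singleton_iff] at e1 e2
        rw [← e1] at e2
        exact absurd e2 (ne_of_gt ih.2.1)
  refine ⟨main, fun n => ?_⟩
  have h := key n ⟨(main n).1, le_of_lt (main n).2.1, (main n).2.2⟩
  have e : Tseq f c c' (n+1) = (h.choose, h.choose_spec.choose) := by
    rw [Tseq, dif_pos h]
  rw [e]
  exact h.choose_spec.choose_spec.2.2.2

lemma acc_infinite {A : Set ℝ} {d : ℝ} {U : Set ℝ} (hU : IsOpen U) (hdU : d ∈ U)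
    (hacc : d ∈ closure (A \ {d})) : ((A \ {d}) ∩ U).Infinite := by
  by_contra hfin
  rw [Set.not_infinite] at hfin
  have hcl : IsClosed ((A \ {d}) ∩ U) := hfin.isClosed
  have hop : IsOpen (U \ ((A \ {d}) ∩ U)) := hU.sdiff hcl
  have hdin : d ∈ U \ ((A \ {d}) ∩ U) := ⟨hdU, fun h => h.1.2 rfl⟩
  obtain ⟨z, hz1, hz2⟩ := mem_closure_iff.1 hacc _ hop hdin
  exact hz1.2 ⟨hz2, hz1.1⟩


lemma build_split {f : ℝ → ℝ} (hf : ContinuousOn f (Icc 0 1)) {c c' y : ℝ}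
    (h0 : 0 < c) (hcc : c < c') (h1 : c' < 1) (hfc : f c = c) (hfc' : f c' = c')
    (hy : y ∈ Icc (0:ℝ) 1)
    (hjump : (y < c ∧ c' < f y) ∨ (c' < y ∧ f y < c)) : SplittingSeq f := by
  obtain ⟨inv, img⟩ := Tseq_props hcc (le_of_lt h0) (le_of_lt h1) hf hfc hfc'
  set l : ℕ → ℝ := fun n => (Tseq f c c' n).1 with hl
  set r : ℕ → ℝ := fun n => (Tseq f c c' n).2 with hr
  have hEx : ∀ n, ∃ u v, u ≤ v ∧ Icc u v ⊆ Icc (0:ℝ) 1 ∧ (v ≤ c ∨ c' ≤ u) ∧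
      f '' Icc u v = Icc (l n) (r n) := by
    intro n
    have hlr : Icc (l n) (r n) ⊆ Icc c c' := Icc_subset_Icc (inv n).1 (inv n).2.2
    rcases hjump with ⟨hyc, hcy⟩ | ⟨hyc, hcy⟩
    · have hcont : ContinuousOn f (Icc y c) :=
        hf.mono (Icc_subset_Icc hy.1 (le_of_lt (lt_trans hcc h1)))
      have hiv : Icc (f c) (f y) ⊆ f '' Icc y c :=
        intermediate_value_Icc' (le_of_lt hyc) hcont
      have hK : Icc (l n) (r n) ⊆ f '' Icc y c := by
        refine subset_trans (subset_trans hlr ?_) hiv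
        rw [hfc]
        exact Icc_subset_Icc le_rfl (le_of_lt hcy)
      obtain ⟨u, v, hu, huv, hv, himg⟩ :=
        exact_sub f (le_of_lt hyc) hcont (le_of_lt (inv n).2.1) hK
      exact ⟨u, v, huv,
        subset_trans (Icc_subset_Icc hu hv)
          (Icc_subset_Icc hy.1 (le_of_lt (lt_trans hcc h1))), Or.inl hv, himg⟩
    · have hcont : ContinuousOn f (Icc c' y) :=
        hf.mono (Icc_subset_Icc (le_of_lt (lt_trans h0 hcc)) hy.2)
      have hiv : Icc (f y) (f c') ⊆ f '' Icc c' y :=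
        intermediate_value_Icc' (le_of_lt hyc) hcont
      have hK : Icc (l n) (r n) ⊆ f '' Icc c' y := by
        refine subset_trans (subset_trans hlr ?_) hiv
        rw [hfc']
        exact Icc_subset_Icc (le_of_lt hcy) le_rfl
      obtain ⟨u, v, hu, huv, hv, himg⟩ :=
        exact_sub f (le_of_lt hyc) hcont (le_of_lt (inv n).2.1) hK
      exact ⟨u, v, huv,
        subset_trans (Icc_subset_Icc hu hv)
          (Icc_subset_Icc (le_of_lt (lt_trans h0 hcc)) hy.2), Or.inr hu, himg⟩
  choose uu vv huv hsub hside himgS using hEx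
  refine ⟨l, r, Set.Ici 1, fun n => Icc (uu (n-1)) (vv (n-1)), ?_, ?_, ?_, ?_, ?_, ?_, ?_⟩
  · exact fun n => le_of_lt (inv n).2.1
  · intro n
    exact subset_trans (Icc_subset_Icc (inv n).1 (inv n).2.2)
      (Icc_subset_Icc (le_of_lt h0) (le_of_lt h1))
  · intro n h
    have : (0:ℝ) ∈ Icc (l n) (r n) := by rw [h]; exact ⟨le_refl 0, zero_le_one⟩
    have := this.1
    have := (inv n).1
    linarith
  · exact img
  · exact ⟨0, fun n _ => (inv n).2.1⟩
  · exact Set.Ici_infinite 1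
  · intro n hn
    have hn1 : n - 1 + 1 = n := Nat.succ_pred_eq_of_pos hn
    have hRHS : f '' Icc (l n) (r n) = Icc (l (n-1)) (r (n-1)) := by
      conv_lhs => rw [← hn1]
      exact img (n-1)
    refine ⟨⟨uu (n-1), vv (n-1), ?_, rfl⟩, hsub (n-1), ?_, ?_⟩
    · rcases lt_or_eq_of_le (huv (n-1)) with h' | h'
      · exact h'
      · exfalso
        have := himgS (n-1)
        rw [← h', Icc_self, image_singleton] at this
        have e1 : l (n-1) ∈ ({f (uu (n-1))} : Set ℝ) := by
          rw [this]; exact ⟨le_refl _, le_of_lt (inv (n-1)).2.1⟩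
        have e2 : r (n-1) ∈ ({f (uu (n-1))} : Set ℝ) := by
          rw [this]; exact ⟨le_of_lt (inv (n-1)).2.1, le_refl _⟩
        rw [mem_singleton_iff] at e1 e2
        rw [← e1] at e2
        exact absurd e2 (ne_of_gt (inv (n-1)).2.1)
    · rintro t ⟨⟨htu, htv⟩, ⟨htl, htr⟩⟩
      simp only [mem_insert_iff, mem_singleton_iff]
      rcases hside (n-1) with h' | h'
      · left
        have : c ≤ l n := (inv n).1
        linarith
      · right
        have : r n ≤ c' := (inv n).2.2
        linarith
    · rw [hRHS]
      exact himgS (n-1)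

theorem stmt_18 (f : ℝ → ℝ) (hf : ContinuousOn f (Icc 0 1))
    (hsurj : f '' Icc 0 1 = Icc 0 1) (hns : ¬ SplittingSeq f)
    (htwo : ∃ x ∈ Icc (0:ℝ) 1, ∃ y ∈ Icc (0:ℝ) 1, x ≠ y ∧ f x = x ∧ f y = y)
    (d : ℝ) (hd : d ∈ Icc (0:ℝ) 1)
    (hacc : d ∈ closure ({x ∈ Icc (0:ℝ) 1 | f x = x} \ {d})) :
    ({x : ℕ → ℝ | (∀ n, x n ∈ Icc (0:ℝ) 1) ∧ ∀ n, f (x (n+1)) = x n} =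
        {x : ℕ → ℝ | (∀ n, x n ∈ Icc 0 d) ∧ ∀ n, f (x (n+1)) = x n} ∪
        {x : ℕ → ℝ | (∀ n, x n ∈ Icc d 1) ∧ ∀ n, f (x (n+1)) = x n}) ∧
    ({x : ℕ → ℝ | (∀ n, x n ∈ Icc 0 d) ∧ ∀ n, f (x (n+1)) = x n} ∩
        {x : ℕ → ℝ | (∀ n, x n ∈ Icc d 1) ∧ ∀ n, f (x (n+1)) = x n} =
      {fun _ => d}) := by
  -- the fixed point set is closed
  have hFixcl : IsClosed {x ∈ Icc (0:ℝ) 1 | f x = x} := by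
    have : {x ∈ Icc (0:ℝ) 1 | f x = x} = Icc (0:ℝ) 1 ∩ (fun t => f t - t) ⁻¹' {0} := by
      ext t
      simp only [mem_sep_iff, mem_inter_iff, mem_preimage, mem_singleton_iff, sub_eq_zero]
    rw [this]
    exact (hf.sub continuousOn_id).preimage_isClosed_of_isClosed isClosed_Icc isClosed_singleton
  have hfd : f d = d := by
    have : d ∈ {x ∈ Icc (0:ℝ) 1 | f x = x} := by
      have h1 : closure ({x ∈ Icc (0:ℝ) 1 | f x = x} \ {d}) ⊆
          closure {x ∈ Icc (0:ℝ) 1 | f x = x} := closure_mono diff_subset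
      have := h1 hacc
      rwa [hFixcl.closure_eq] at this
    exact this.2
  have hd0 : (0:ℝ) ≤ d := hd.1
  have hd1 : d ≤ 1 := hd.2
  constructor
  · apply Subset.antisymm
    · intro x hx
      obtain ⟨hx01, horb⟩ := hx
      by_contra hmem
      simp only [mem_union, mem_setOf_eq, not_or, not_and] at hmem
      obtain ⟨h1', h2'⟩ := hmem
      have hi : ∃ i, d < x i := by
        by_contra h
        push_neg at h
        exact (h1' (fun n => ⟨(hx01 n).1, h n⟩)) horb
      have hk : ∃ k, x k < d := by
        by_contra h
        push_neg at h
        exact (h2' (fun n => ⟨h n, (hx01 n).2⟩)) horb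
      obtain ⟨i, hi⟩ := hi
      obtain ⟨k, hk⟩ := hk
      exfalso
      apply hns
      -- infinitely many fixed points in (x k, x i), distinct from d and the orbit segment
      set V : Finset ℝ := (Finset.Icc (min i k) (max i k)).image x with hV
      have hWinf : ((({x ∈ Icc (0:ℝ) 1 | f x = x} \ {d}) ∩ Ioo (x k) (x i)) \ ↑V).Infinite :=
        ((acc_infinite isOpen_Ioo ⟨hk, hi⟩ hacc).diff (V.finite_toSet))
      set W := ((({x ∈ Icc (0:ℝ) 1 | f x = x} \ {d}) ∩ Ioo (x k) (x i)) \ ↑V) with hW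
      have hxiV : x i ∈ V := by
        apply Finset.mem_image_of_mem
        simp [Finset.mem_Icc, le_max_left, min_le_left]
      classical
      set g : ℝ → ℝ := fun w =>
        if h : ((V.filter (fun v => w < v)).Nonempty) then (V.filter (fun v => w < v)).min' h
        else 0 with hg
      have hgmem : ∀ w ∈ W, (V.filter (fun v => w < v)).Nonempty ∧
          g w ∈ V.filter (fun v => w < v) := by
        intro w hw
        have hne : (V.filter (fun v => w < v)).Nonempty :=
          ⟨x i, Finset.mem_filter.2 ⟨hxiV, hw.1.2.2⟩⟩
        exact ⟨hne, by rw [hg]; simp only [dif_pos hne]; exact Finset.min'_mem _ hne⟩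
      have hmaps : Set.MapsTo g W ↑V := fun w hw =>
        (Finset.mem_filter.1 (hgmem w hw).2).1
      obtain ⟨a, ha, b, hb, hne, hgab⟩ :=
        hWinf.exists_ne_map_eq_of_mapsTo hmaps V.finite_toSet
      have key : ∀ a b : ℝ, a ∈ W → b ∈ W → a < b → g a = g b → SplittingSeq f := by
        intro a b ha hb hab hgab
        -- no orbit point in [a,b]
        have noV : ∀ n, min i k ≤ n → n ≤ max i k → x n ∉ Icc a b := by
          intro n hn1 hn2 hmem'
          have hxnV : x n ∈ V := Finset.mem_image_of_mem x (Finset.mem_Icc.2 ⟨hn1, hn2⟩)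
          have hna : x n ≠ a := fun h => ha.2 (h ▸ hxnV)
          have hnb : x n ≠ b := fun h => hb.2 (h ▸ hxnV)
          have h1 : a < x n := lt_of_le_of_ne hmem'.1 (Ne.symm hna)
          have h2 : x n < b := lt_of_le_of_ne hmem'.2 hnb
          have hgale : g a ≤ x n := by
            have hxn_filt : x n ∈ V.filter (fun v => a < v) :=
              Finset.mem_filter.2 ⟨hxnV, h1⟩
            have := (hgmem a ha).1
            rw [hg]
            simp only [dif_pos this]
            exact Finset.min'_le _ _ hxn_filt
          have hgb : b < g b := (Finset.mem_filter.1 (hgmem b hb).2).2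
          rw [← hgab] at hgb
          linarith
        -- both sides occur in the orbit segment
        have hside : ∀ n, min i k ≤ n → n ≤ max i k → x n < a ∨ b < x n := by
          intro n hn1 hn2
          rcases lt_or_ge (x n) a with h | h
          · exact Or.inl h
          · rcases le_or_gt (x n) b with h' | h'
            · exact absurd ⟨h, h'⟩ (noV n hn1 hn2)
            · exact Or.inr h'
        have haI : a ∈ Ioo (x k) (x i) := ha.1.2
        have hbI : b ∈ Ioo (x k) (x i) := hb.1.2
        have hfa : f a = a := ha.1.1.1.2
        have hfb : f b = b := hb.1.1.1.2
        -- find a flip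
        have hflip : ∃ j, min i k ≤ j ∧ j + 1 ≤ max i k ∧
            ¬ ((b < x j) ↔ (b < x (j+1))) := by
          by_contra hcon
          push_neg at hcon
          have hconst : ∀ t, min i k + t ≤ max i k → ((b < x (min i k + t)) ↔ (b < x (min i k))) := by
            intro t
            induction t with
            | zero => intro _; rfl
            | succ t ih =>
              intro ht
              have h1 : min i k + t ≤ max i k := by omega
              have h2 := hcon (min i k + t) (by omega) (by omega)
              have : min i k + (t+1) = (min i k + t) + 1 := by omega
              rw [this, ← h2]
              exact ih h1
          have hik : i ≠ k := by
            intro h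
            rw [h] at hi
            linarith
          have hRi : b < x i := hbI.2
          have hRk : ¬ b < x k := by
            have := haI.1
            linarith
          rcases le_total i k with h | h
          · have e1 : min i k = i := min_eq_left h
            have e2 : max i k = k := max_eq_right h
            have := hconst (k - i) (by omega)
            rw [e1] at this
            have e3 : i + (k - i) = k := by omega
            rw [e3] at this
            exact hRk (this.2 hRi)
          · have e1 : min i k = k := min_eq_right h
            have e2 : max i k = i := max_eq_left h
            have := hconst (i - k) (by omega)
            rw [e1] at this
            have e3 : k + (i - k) = i := by omega
            rw [e3] at this
            exact hRk (this.1 hRi)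
        obtain ⟨j, hj1, hj2, hj3⟩ := hflip
        have ha0 : 0 < a := lt_of_le_of_lt (hx01 k).1 haI.1
        have hb1 : b < 1 := lt_of_lt_of_le hbI.2 (hx01 i).2
        have hsj := hside j hj1 (by omega)
        have hsj1 := hside (j+1) (by omega) hj2
        have hyI : x (j+1) ∈ Icc (0:ℝ) 1 := hx01 (j+1)
        have hfy : f (x (j+1)) = x j := horb j
        rcases hsj with hja | hjb
        · rcases hsj1 with hj1a | hj1b
          · exfalso
            exact hj3 (iff_of_false (by linarith) (by linarith))
          · exact build_split hf ha0 hab hb1 hfa hfb hyI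
              (Or.inr ⟨hj1b, by rw [hfy]; exact hja⟩)
        · rcases hsj1 with hj1a | hj1b
          · exact build_split hf ha0 hab hb1 hfa hfb hyI
              (Or.inl ⟨by linarith, by rw [hfy]; exact hjb⟩)
          · exfalso
            exact hj3 (iff_of_true hjb hj1b)
      rcases lt_or_gt_of_ne hne with h | h
      · exact key a b ha hb h hgab
      · exact key b a hb ha h hgab.symm
    · rintro x (⟨hx, horb⟩ | ⟨hx, horb⟩)
      · exact ⟨fun n => ⟨(hx n).1, le_trans (hx n).2 hd1⟩, horb⟩
      · exact ⟨fun n => ⟨le_trans hd0 (hx n).1, (hx n).2⟩, horb⟩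
  · apply Subset.antisymm
    · rintro x ⟨⟨hx1, _⟩, ⟨hx2, _⟩⟩
      have : x = fun _ => d := funext fun n => le_antisymm (hx1 n).2 (hx2 n).1
      simp [this]
    · rintro x hx
      simp only [mem_singleton_iff] at hx
      subst hx
      exact ⟨⟨fun n => ⟨hd0, le_refl d⟩, fun n => hfd⟩,
             ⟨fun n => ⟨le_refl d, hd1⟩, fun n => hfd⟩⟩
end

section
/- Let f : [0,1] → [0,1] be continuous and surjective. If f admits a splitting sequence, then there is a nondegenerate subcontinuum C of the inverse limit Lf and a sequence of nondegenerate subcontinua C_n ⊆ Lf with C_n ≠ C for all n, such that C_n → C in the Hausdorff metric. In particular, Lf is not an arc. -/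
open Set Filter Topology

/-- The inverse limit of `f : [0,1] → [0,1]`, as a set of sequences. -/
def invLimit (f : ℝ → ℝ) : Set (ℕ → ℝ) :=
  {x | (∀ n, x n ∈ Icc (0:ℝ) 1) ∧ ∀ n, f (x (n+1)) = x n}

/-- Hausdorff distance on subsets of `ℕ → ℝ`, using the (non-canonical but
topologically correct) product metric of `PiCountable.metricSpace`. -/
noncomputable def seqHausdorffDist (A B : Set (ℕ → ℝ)) : ℝ :=
  @Metric.hausdorffDist (ℕ → ℝ)
    (@MetricSpace.toPseudoMetricSpace _ (PiCountable.metricSpace)) A B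

noncomputable def pdist (x y : ℕ → ℝ) : ℝ := ∑' i : ℕ, min ((1/2)^i) (dist (x i) (y i))

lemma pdist_eq (x y : ℕ → ℝ) :
    @dist _ (@MetricSpace.toPseudoMetricSpace _ PiCountable.metricSpace).toDist x y
      = pdist x y := by
  letI := PiCountable.metricSpace (F := fun _ : ℕ => ℝ)
  rw [show (@dist _ (@MetricSpace.toPseudoMetricSpace _ PiCountable.metricSpace).toDist x y) = dist x y from rfl]
  rw [PiCountable.dist_eq_tsum]
  simp [pdist, Encodable.encode_nat]

lemma pdist_nonneg (x y : ℕ → ℝ) : 0 ≤ pdist x y :=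
  tsum_nonneg fun i => le_min (by positivity) dist_nonneg

lemma seqHausdorffDist_nonneg (A B : Set (ℕ → ℝ)) : 0 ≤ seqHausdorffDist A B := by
  letI := PiCountable.metricSpace (F := fun _ : ℕ => ℝ)
  exact Metric.hausdorffDist_nonneg

lemma seqHausdorffDist_le (A B : Set (ℕ → ℝ)) (r : ℝ) (hr : 0 ≤ r)
    (h1 : ∀ x ∈ A, ∃ y ∈ B, pdist x y ≤ r) (h2 : ∀ y ∈ B, ∃ x ∈ A, pdist x y ≤ r) :
    seqHausdorffDist A B ≤ r := by
  letI := PiCountable.metricSpace (F := fun _ : ℕ => ℝ)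
  refine Metric.hausdorffDist_le_of_mem_dist hr ?_ ?_
  · intro x hx; obtain ⟨y, hy, h⟩ := h1 x hx
    exact ⟨y, hy, by rw [show dist x y = pdist x y from pdist_eq x y]; exact h⟩
  · intro y hy; obtain ⟨x, hx, h⟩ := h2 y hy
    exact ⟨x, hx, by rw [show dist y x = pdist y x from pdist_eq y x,
      show pdist y x = pdist x y by simp [pdist, dist_comm]]; exact h⟩

lemma pdist_summable (x y : ℕ → ℝ) :
    Summable (fun i : ℕ => min ((1/2:ℝ)^i) (dist (x i) (y i))) := by
  refine Summable.of_nonneg_of_le (fun i => le_min (by positivity) dist_nonneg)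
    (fun i => min_le_left _ _) (summable_geometric_of_lt_one (by norm_num) (by norm_num))

lemma pdist_le_two (x y : ℕ → ℝ) : pdist x y ≤ 2 := by
  have h := Summable.tsum_le_tsum (fun i => min_le_left ((1/2:ℝ)^i) (dist (x i) (y i)))
    (pdist_summable x y) (summable_geometric_of_lt_one (by norm_num) (by norm_num))
  calc pdist x y ≤ ∑' i : ℕ, (1/2:ℝ)^i := h
    _ = 2 := by rw [tsum_geometric_of_lt_one (by norm_num) (by norm_num)]; norm_num

lemma pdist_le_of_agree {x y : ℕ → ℝ} {n : ℕ} (h : ∀ k < n, x k = y k) :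
    pdist x y ≤ 2 * (1/2)^n := by
  have hs := pdist_summable x y
  rw [pdist, ← Summable.sum_add_tsum_nat_add n hs]
  have h1 : ∑ i ∈ Finset.range n, min ((1/2:ℝ)^i) (dist (x i) (y i)) = 0 := by
    refine Finset.sum_eq_zero fun i hi => ?_
    rw [h i (Finset.mem_range.1 hi), dist_self]
    exact min_eq_right (by positivity)
  rw [h1, zero_add]
  have h2 : ∑' i : ℕ, min ((1/2:ℝ)^(i+n)) (dist (x (i+n)) (y (i+n))) ≤ ∑' i : ℕ, (1/2:ℝ)^(i+n) := by
    refine Summable.tsum_le_tsum (fun i => min_le_left _ _) ((summable_nat_add_iff n).2 hs) ?_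
    exact (summable_nat_add_iff n).2 (summable_geometric_of_lt_one (by norm_num) (by norm_num))
  refine h2.trans ?_
  have : ∑' i : ℕ, (1/2:ℝ)^(i+n) = (∑' i : ℕ, (1/2:ℝ)^i) * (1/2)^n := by
    rw [← tsum_mul_right]; congr 1; ext i; rw [pow_add]
  rw [this, tsum_geometric_of_lt_one (by norm_num) (by norm_num)]
  norm_num

lemma dist_coord_le {x y : ℕ → ℝ} {k : ℕ} (h : pdist x y < (1/2)^k) :
    dist (x k) (y k) ≤ pdist x y := by
  have hle : min ((1/2:ℝ)^k) (dist (x k) (y k)) ≤ pdist x y :=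
    Summable.le_tsum (pdist_summable x y) k (fun j _ => le_min (by positivity) dist_nonneg)
  rcases min_le_iff.1 (le_refl (min ((1/2:ℝ)^k) (dist (x k) (y k)))) with h' | h'
  · rcases le_or_gt (dist (x k) (y k)) ((1/2:ℝ)^k) with hc | hc
    · rwa [min_eq_right hc] at hle
    · exfalso; rw [min_eq_left hc.le] at hle; linarith
  · rcases le_or_gt (dist (x k) (y k)) ((1/2:ℝ)^k) with hc | hc
    · rwa [min_eq_right hc] at hle
    · exfalso; rw [min_eq_left hc.le] at hle; linarith

lemma seqHausdorff_exists_near {A B : Set (ℕ → ℝ)} (hA : A.Nonempty) {x : ℕ → ℝ}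
    (hx : x ∈ B) {ε : ℝ} (hε : 0 < ε) :
    ∃ y ∈ A, pdist x y < seqHausdorffDist A B + ε := by
  letI := PiCountable.metricSpace (F := fun _ : ℕ => ℝ)
  have hbdd : ∀ s : Set (ℕ → ℝ), @Bornology.IsBounded _ (PseudoMetricSpace.toBornology) s := by
    intro s
    refine Metric.isBounded_iff.2 ⟨2, fun a _ b _ => ?_⟩
    calc dist a b = pdist a b := by
          rw [PiCountable.dist_eq_tsum]; simp [pdist, Encodable.encode_nat]
      _ ≤ 2 := pdist_le_two a b
  have hne : @EMetric.hausdorffEdist (ℕ → ℝ) (by infer_instance) B A ≠ ⊤ :=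
    Metric.hausdorffEdist_ne_top_of_nonempty_of_bounded ⟨x, hx⟩ hA (hbdd B) (hbdd A)
  have h1 : Metric.infDist x A ≤ seqHausdorffDist A B := by
    have := Metric.infDist_le_hausdorffDist_of_mem hx hne
    rwa [Metric.hausdorffDist_comm] at this
  have h2 : Metric.infDist x A < seqHausdorffDist A B + ε := lt_of_le_of_lt h1 (by linarith)
  obtain ⟨y, hy, hd⟩ := (Metric.infDist_lt_iff hA).1 h2
  exact ⟨y, hy, by rw [← show dist x y = pdist x y by
    rw [PiCountable.dist_eq_tsum]; simp [pdist, Encodable.encode_nat]]; exact hd⟩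
def chainSet (g : ℝ → ℝ) (a b : ℕ → ℝ) : Set (ℕ → ℝ) :=
  {x | (∀ k, x k ∈ Icc (a k) (b k)) ∧ ∀ k, g (x (k+1)) = x k}

variable {g : ℝ → ℝ}

lemma chain_det' {x : ℕ → ℝ} {n : ℕ} (h : ∀ k < n, g (x (k+1)) = x k) :
    ∀ k i, k + i ≤ n → x k = g^[i] (x (k+i)) := by
  intro k i
  induction i with
  | zero => intro _; rfl
  | succ i ih =>
      intro hle
      rw [show k + (i+1) = (k+i)+1 from rfl, Function.iterate_succ_apply, h (k+i) (by omega)]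
      exact ih (by omega)

lemma chain_det {x : ℕ → ℝ} (h : ∀ k, g (x (k+1)) = x k) (k i : ℕ) :
    x k = g^[i] (x (k+i)) :=
  chain_det' (n := k + i) (fun k _ => h k) k i le_rfl

lemma iter_mem {a b : ℕ → ℝ}
    (himg : ∀ k, g '' Icc (a (k+1)) (b (k+1)) = Icc (a k) (b k)) :
    ∀ i k, ∀ t ∈ Icc (a (k+i)) (b (k+i)), g^[i] t ∈ Icc (a k) (b k) := by
  intro i
  induction i with
  | zero => intro k t ht; simpa using ht
  | succ i ih =>
      intro k t ht
      rw [Function.iterate_succ_apply]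
      refine ih k (g t) ?_
      have hmem : g t ∈ g '' Icc (a ((k+i)+1)) (b ((k+i)+1)) := ⟨t, ht, rfl⟩
      rw [himg (k+i)] at hmem; exact hmem

lemma exists_mem_chainSet {a b : ℕ → ℝ}
    (himg : ∀ k, g '' Icc (a (k+1)) (b (k+1)) = Icc (a k) (b k))
    (j : ℕ) {t : ℝ} (ht : t ∈ Icc (a j) (b j)) :
    ∃ x ∈ chainSet g a b, x j = t := by
  have step : ∀ i (y : ℝ), ∃ z : ℝ, y ∈ Icc (a (j+i)) (b (j+i)) →
      z ∈ Icc (a (j+i+1)) (b (j+i+1)) ∧ g z = y := by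
    intro i y
    by_cases hy : y ∈ Icc (a (j+i)) (b (j+i))
    · have hmem : y ∈ g '' Icc (a (j+i+1)) (b (j+i+1)) := by rw [himg (j+i)]; exact hy
      obtain ⟨z, hz, hgz⟩ := hmem
      exact ⟨z, fun _ => ⟨hz, hgz⟩⟩
    · exact ⟨0, fun h => absurd h hy⟩
  choose Z hZ using step
  set up : ℕ → ℝ := fun i => Nat.rec t (fun i y => Z i y) i with hup
  have upmem : ∀ i, up i ∈ Icc (a (j+i)) (b (j+i)) := by
    intro i; induction i with
    | zero => exact ht
    | succ i ih => exact (hZ i (up i) ih).1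
  have upeq : ∀ i, g (up (i+1)) = up i := fun i => (hZ i (up i) (upmem i)).2
  refine ⟨fun k => if h : j ≤ k then up (k - j) else g^[j - k] t, ⟨?_, ?_⟩, ?_⟩
  · intro k
    by_cases h : j ≤ k
    · simp only [dif_pos h]
      have hm := upmem (k - j)
      rwa [Nat.add_sub_cancel' h] at hm
    · simp only [dif_neg h]
      push_neg at h
      have ht' : t ∈ Icc (a (k + (j - k))) (b (k + (j - k))) := by
        rwa [Nat.add_sub_cancel' h.le]
      exact iter_mem himg (j-k) k t ht'
  · intro k
    by_cases h : j ≤ k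
    · simp only [dif_pos (h.trans (Nat.le_succ k)), dif_pos h]
      rw [show k + 1 - j = (k - j) + 1 by omega, upeq]
    · push_neg at h
      by_cases h1 : j ≤ k + 1
      · simp only [dif_pos h1, dif_neg (show ¬ j ≤ k by omega)]
        rw [show k + 1 - j = 0 by omega]
        rw [show (up 0 : ℝ) = t from rfl]
        rw [show j - k = 1 by omega]; simp
      · simp only [dif_neg (show ¬ j ≤ k + 1 from h1), dif_neg (show ¬ j ≤ k by omega)]
        rw [show j - k = (j - (k+1)) + 1 by omega, Function.iterate_succ_apply']
  · simp only [dif_pos (le_refl j), Nat.sub_self]; rfl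

lemma chainSet_nonempty {a b : ℕ → ℝ} (hab : ∀ k, a k ≤ b k)
    (himg : ∀ k, g '' Icc (a (k+1)) (b (k+1)) = Icc (a k) (b k)) :
    (chainSet g a b).Nonempty := by
  obtain ⟨x, hx, -⟩ := exists_mem_chainSet himg 0 (⟨le_refl _, hab 0⟩ : a 0 ∈ Icc (a 0) (b 0))
  exact ⟨x, hx⟩

lemma chainSet_nontrivial {a b : ℕ → ℝ}
    (himg : ∀ k, g '' Icc (a (k+1)) (b (k+1)) = Icc (a k) (b k))
    {j : ℕ} (h : a j < b j) : (chainSet g a b).Nontrivial := by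
  obtain ⟨x, hx, hxj⟩ := exists_mem_chainSet himg j (⟨le_refl _, h.le⟩ : a j ∈ Icc (a j) (b j))
  obtain ⟨y, hy, hyj⟩ := exists_mem_chainSet himg j (⟨h.le, le_refl _⟩ : b j ∈ Icc (a j) (b j))
  exact ⟨x, hx, y, hy, fun hxy => absurd (congrFun hxy j) (by rw [hxj, hyj]; exact h.ne)⟩

lemma isCompact_chainSet (hg : Continuous g) (a b : ℕ → ℝ) :
    IsCompact (chainSet g a b) := by
  have h1 : IsClosed {x : ℕ → ℝ | ∀ k, x k ∈ Icc (a k) (b k)} := by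
    have : {x : ℕ → ℝ | ∀ k, x k ∈ Icc (a k) (b k)} = ⋂ k, (fun x : ℕ → ℝ => x k) ⁻¹' Icc (a k) (b k) := by
      ext x; simp
    rw [this]
    exact isClosed_iInter fun k => isClosed_Icc.preimage (continuous_apply k)
  have h2 : IsClosed {x : ℕ → ℝ | ∀ k, g (x (k+1)) = x k} := by
    have : {x : ℕ → ℝ | ∀ k, g (x (k+1)) = x k} = ⋂ k, {x : ℕ → ℝ | g (x (k+1)) = x k} := by
      ext x; simp
    rw [this]
    exact isClosed_iInter fun k => isClosed_eq (hg.comp (continuous_apply (k+1))) (continuous_apply k)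
  refine IsCompact.of_isClosed_subset
    (isCompact_univ_pi (fun k : ℕ => (isCompact_Icc : IsCompact (Icc (a k) (b k)))))
    (h1.inter h2) ?_
  intro x hx
  exact Set.mem_univ_pi.2 (fun k => hx.1 k)

lemma isConnected_iInter_seq {X : Type*} [TopologicalSpace X] [T2Space X]
    {K : ℕ → Set X} (hcomp : ∀ n, IsCompact (K n)) (hconn : ∀ n, IsConnected (K n))
    (hdec : ∀ n, K (n+1) ⊆ K n) : IsConnected (⋂ n, K n) := by
  have hclosed : ∀ n, IsClosed (K n) := fun n => (hcomp n).isClosed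
  have hne : (⋂ n, K n).Nonempty :=
    IsCompact.nonempty_iInter_of_sequence_nonempty_isCompact_isClosed K hdec
      (fun n => (hconn n).nonempty) (hcomp 0) hclosed
  refine ⟨hne, ?_⟩
  rw [isPreconnected_iff_subset_of_fully_disjoint_closed (isClosed_iInter hclosed)]
  intro t1 t2 ht1 ht2 hcover hdisj
  set A := (⋂ n, K n) ∩ t1 with hAdef
  set B := (⋂ n, K n) ∩ t2 with hBdef
  rcases A.eq_empty_or_nonempty with hA | hA
  · right; intro x hx
    rcases hcover hx with h | h
    · exact absurd (show x ∈ A from ⟨hx, h⟩) (Set.eq_empty_iff_forall_notMem.1 hA x)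
    · exact h
  rcases B.eq_empty_or_nonempty with hB | hB
  · left; intro x hx
    rcases hcover hx with h | h
    · exact h
    · exact absurd (show x ∈ B from ⟨hx, h⟩) (Set.eq_empty_iff_forall_notMem.1 hB x)
  exfalso
  have hAc : IsCompact A :=
    (hcomp 0).of_isClosed_subset ((isClosed_iInter hclosed).inter ht1)
      (fun x hx => (Set.mem_iInter.1 hx.1) 0)
  have hBc : IsCompact B :=
    (hcomp 0).of_isClosed_subset ((isClosed_iInter hclosed).inter ht2)
      (fun x hx => (Set.mem_iInter.1 hx.1) 0)
  have hABdisj : Disjoint A B :=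
    Set.disjoint_of_subset (fun x hx => hx.2) (fun x hx => hx.2) hdisj
  obtain ⟨u, v, hu, hv, hAu, hBv, huv⟩ := SeparatedNhds.of_isCompact_isCompact hAc hBc hABdisj
  have hLne : ∀ n, (K n ∩ (u ∪ v)ᶜ).Nonempty := by
    intro n
    by_contra hcon
    rw [Set.not_nonempty_iff_eq_empty] at hcon
    have hKuv : K n ⊆ u ∪ v := by
      intro x hx
      by_contra hxu
      exact (Set.eq_empty_iff_forall_notMem.1 hcon x) ⟨hx, hxu⟩
    obtain ⟨xa, hxa⟩ := hA
    obtain ⟨xb, hxb⟩ := hB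
    have h1 : (K n ∩ u).Nonempty := ⟨xa, Set.mem_iInter.1 hxa.1 n, hAu ⟨hxa.1, hxa.2⟩⟩
    have h2 : (K n ∩ v).Nonempty := ⟨xb, Set.mem_iInter.1 hxb.1 n, hBv ⟨hxb.1, hxb.2⟩⟩
    obtain ⟨z, hz⟩ := (hconn n).isPreconnected u v hu hv hKuv h1 h2
    exact Set.disjoint_left.1 huv hz.2.1 hz.2.2
  have hmain : (⋂ n, K n ∩ (u ∪ v)ᶜ).Nonempty := by
    refine IsCompact.nonempty_iInter_of_sequence_nonempty_isCompact_isClosed _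
      (fun n => Set.inter_subset_inter_left _ (hdec n)) hLne
      ((hcomp 0).of_isClosed_subset ((hclosed 0).inter (hu.union hv).isClosed_compl) Set.inter_subset_left)
      (fun n => (hclosed n).inter (hu.union hv).isClosed_compl)
  obtain ⟨z, hz⟩ := hmain
  have hz1 : z ∈ ⋂ n, K n := Set.mem_iInter.2 fun n => (Set.mem_iInter.1 hz n).1
  have hz2 : z ∉ u ∪ v := (Set.mem_iInter.1 hz 0).2
  rcases hcover hz1 with h | h
  · exact hz2 (Or.inl (hAu ⟨hz1, h⟩))
  · exact hz2 (Or.inr (hBv ⟨hz1, h⟩))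

lemma isConnected_chainSet (hg : Continuous g) {a b : ℕ → ℝ} (hab : ∀ k, a k ≤ b k)
    (himg : ∀ k, g '' Icc (a (k+1)) (b (k+1)) = Icc (a k) (b k)) :
    IsConnected (chainSet g a b) := by
  set P : Set (ℕ → ℝ) := univ.pi (fun k => Icc (a k) (b k)) with hPdef
  have hPc : IsCompact P := isCompact_univ_pi (fun k => isCompact_Icc)
  have hPconn : IsConnected P := by
    refine ⟨⟨a, ?_⟩, isPreconnected_univ_pi (fun k => isPreconnected_Icc)⟩
    intro k _; exact ⟨le_refl _, hab k⟩
  set φ : ℕ → (ℕ → ℝ) → (ℕ → ℝ) := fun n x k => if k ≤ n then g^[n - k] (x n) else x k with hφdef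
  have hφc : ∀ n, Continuous (φ n) := by
    intro n; refine continuous_pi fun k => ?_
    by_cases h : k ≤ n
    · simp only [hφdef, if_pos h]
      exact (hg.iterate (n-k)).comp (continuous_apply n)
    · simp only [hφdef, if_neg h]
      exact continuous_apply k
  set Q : ℕ → Set (ℕ → ℝ) :=
    fun n => {x | (∀ k, x k ∈ Icc (a k) (b k)) ∧ ∀ k < n, g (x (k+1)) = x k} with hQdef
  have hKQ : ∀ n, φ n '' P = Q n := by
    intro n
    apply Set.Subset.antisymm
    · rintro - ⟨x, hx, rfl⟩
      have hxmem : ∀ k, x k ∈ Icc (a k) (b k) := fun k => hx k (Set.mem_univ k)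
      constructor
      · intro k
        by_cases h : k ≤ n
        · simp only [hφdef, if_pos h]
          have : x n ∈ Icc (a (k + (n - k))) (b (k + (n - k))) := by
            rw [Nat.add_sub_cancel' h]; exact hxmem n
          exact iter_mem himg (n-k) k (x n) this
        · simp only [hφdef, if_neg h]; exact hxmem k
      · intro k hk
        simp only [hφdef, if_pos (Nat.succ_le_of_lt hk), if_pos hk.le]
        rw [show n - k = (n - (k+1)) + 1 by omega, Function.iterate_succ_apply']
    · intro x hxQ
      refine ⟨x, fun k _ => hxQ.1 k, ?_⟩
      funext k
      by_cases h : k ≤ n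
      · simp only [hφdef, if_pos h]
        have hd := chain_det' hxQ.2 k (n-k) (by omega)
        rw [Nat.add_sub_cancel' h] at hd
        exact hd.symm
      · simp only [hφdef, if_neg h]
  have hchain_eq : chainSet g a b = ⋂ n, Q n := by
    ext x
    simp only [chainSet, hQdef, Set.mem_iInter, Set.mem_setOf_eq]
    constructor
    · rintro ⟨h1, h2⟩ n; exact ⟨h1, fun k _ => h2 k⟩
    · intro h
      exact ⟨fun k => (h 0).1 k, fun k => (h (k+1)).2 k (Nat.lt_succ_self k)⟩
  rw [hchain_eq]
  refine isConnected_iInter_seq (fun n => ?_) (fun n => ?_) (fun n => ?_)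
  · rw [← hKQ n]; exact hPc.image (hφc n)
  · rw [← hKQ n]; exact hPconn.image _ (hφc n).continuousOn
  · intro x hx; exact ⟨hx.1, fun k hk => hx.2 k (hk.trans (Nat.lt_succ_self n))⟩
lemma ivt_onto_of_le {g : ℝ → ℝ} (hg : Continuous g) {u v p q : ℝ} (hpq : p ≤ q)
    (hp : g p = u) (hq : g q = v) (huv : u ≤ v) :
    ∃ a b, p ≤ a ∧ a ≤ b ∧ b ≤ q ∧ g '' Icc a b = Icc u v := by
  set B := Icc p q ∩ g ⁻¹' {v} with hBdef
  have hBne : B.Nonempty := ⟨q, ⟨hpq, le_refl q⟩, hq⟩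
  have hBc : IsClosed B := isClosed_Icc.inter (isClosed_singleton.preimage hg)
  have hBbdd : BddBelow B := (bddBelow_Icc : BddBelow (Icc p q)).mono Set.inter_subset_left
  set b := sInf B with hbdef
  have hbB : b ∈ B := hBc.csInf_mem hBne hBbdd
  have hgb : g b = v := hbB.2
  have hpb : p ≤ b := hbB.1.1
  have hbq : b ≤ q := hbB.1.2
  set A := Icc p b ∩ g ⁻¹' {u} with hAdef
  have hAne : A.Nonempty := ⟨p, ⟨le_refl p, hpb⟩, hp⟩
  have hAc : IsClosed A := isClosed_Icc.inter (isClosed_singleton.preimage hg)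
  have hAbdd : BddAbove A := (bddAbove_Icc (a := p) (b := b)).mono Set.inter_subset_left
  set a := sSup A with hadef
  have haA : a ∈ A := hAc.csSup_mem hAne hAbdd
  have hga : g a = u := haA.2
  have hpa : p ≤ a := haA.1.1
  have hab : a ≤ b := haA.1.2
  refine ⟨a, b, hpa, hab, hbq, Set.Subset.antisymm ?_ ?_⟩
  · rintro - ⟨x, hx, rfl⟩
    constructor
    · by_contra hlt
      push_neg at hlt
      have hiv := intermediate_value_Icc hx.2 hg.continuousOn
      have hu : u ∈ Icc (g x) (g b) := by rw [hgb]; exact ⟨hlt.le, huv⟩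
      obtain ⟨c, hc, hgc⟩ := hiv hu
      have hcA : c ∈ A := ⟨⟨hpa.trans (hx.1.trans hc.1), hc.2⟩, hgc⟩
      have hca : c ≤ a := le_csSup hAbdd hcA
      have hxa : x = a := le_antisymm (by linarith [hc.1]) hx.1
      rw [hxa, hga] at hlt
      exact absurd hlt (lt_irrefl u)
    · by_contra hlt
      push_neg at hlt
      have hiv := intermediate_value_Icc hx.1 hg.continuousOn
      have hv : v ∈ Icc (g a) (g x) := by rw [hga]; exact ⟨huv, hlt.le⟩
      obtain ⟨c, hc, hgc⟩ := hiv hv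
      have hcB : c ∈ B := ⟨⟨hpa.trans hc.1, (hc.2.trans hx.2).trans hbq⟩, hgc⟩
      have hbc : b ≤ c := csInf_le hBbdd hcB
      have hxb : x = b := le_antisymm hx.2 (by linarith [hc.2])
      rw [hxb, hgb] at hlt
      exact absurd hlt (lt_irrefl v)
  · have hiv := intermediate_value_Icc hab hg.continuousOn
    rw [hga, hgb] at hiv
    exact hiv

lemma ivt_onto {g : ℝ → ℝ} (hg : Continuous g) {u v p q : ℝ}
    (hp : g p = u) (hq : g q = v) (huv : u ≤ v) :
    ∃ a b, min p q ≤ a ∧ a ≤ b ∧ b ≤ max p q ∧ g '' Icc a b = Icc u v := by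
  rcases le_total p q with h | h
  · obtain ⟨a, b, h1, h2, h3, h4⟩ := ivt_onto_of_le hg h hp hq huv
    exact ⟨a, b, (min_le_left p q).trans h1, h2, h3.trans (le_max_right p q), h4⟩
  · obtain ⟨a, b, h1, h2, h3, h4⟩ :=
      ivt_onto_of_le (g := fun x => g (-x)) (hg.comp continuous_neg) (neg_le_neg h)
        (by simpa using hp) (by simpa using hq) huv
    refine ⟨-b, -a, ?_, by linarith, ?_, ?_⟩
    · have : min p q = q := min_eq_right h
      rw [this]; linarith
    · have : max p q = p := max_eq_left h
      rw [this]; linarith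
    · rw [← h4]
      apply Set.Subset.antisymm
      · rintro - ⟨z, hz, rfl⟩
        exact ⟨-z, ⟨by linarith [hz.2], by linarith [hz.1]⟩, by simp⟩
      · rintro - ⟨z, hz, rfl⟩
        exact ⟨-z, ⟨by linarith [hz.2], by linarith [hz.1]⟩, by simp⟩
theorem stmt_19 (f : ℝ → ℝ) (hf : ContinuousOn f (Icc 0 1))
    (hsurj : f '' Icc 0 1 = Icc 0 1) (hsplit : SplittingSeq f) :
    (∃ (C : Set (ℕ → ℝ)) (Cs : ℕ → Set (ℕ → ℝ)),
      C ⊆ invLimit f ∧ IsCompact C ∧ IsConnected C ∧ C.Nontrivial ∧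
      (∀ n, Cs n ⊆ invLimit f ∧ IsCompact (Cs n) ∧ IsConnected (Cs n) ∧
        (Cs n).Nontrivial ∧ Cs n ≠ C) ∧
      Tendsto (fun n => seqHausdorffDist (Cs n) C) atTop (𝓝 0)) ∧
    ¬ Nonempty ((invLimit f) ≃ₜ (Icc (0:ℝ) 1)) := by
  obtain ⟨l, r, N, S, hlr, hsubT, -, himgT, ⟨m, hm⟩, hNinf, hS⟩ := hsplit
  -- continuous extension of f
  set π : ℝ → ℝ := fun x => max 0 (min 1 x) with hπdef
  have hπc : Continuous π := continuous_const.max (continuous_const.min continuous_id)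
  have hπmem : ∀ x, π x ∈ Icc (0:ℝ) 1 :=
    fun x => ⟨le_max_left _ _, max_le zero_le_one (min_le_left _ _)⟩
  set g : ℝ → ℝ := fun x => f (π x) with hgdef
  have hg : Continuous g := hf.comp_continuous hπc hπmem
  have hgf : ∀ x ∈ Icc (0:ℝ) 1, g x = f x := by
    intro x hx
    have hπx : π x = x := by
      simp only [hπdef]; rw [min_eq_right hx.2, max_eq_right hx.1]
    simp only [hgdef, hπx]
  have himg_eq : ∀ s : Set ℝ, s ⊆ Icc 0 1 → g '' s = f '' s :=
    fun s hs => Set.image_congr (fun x hx => hgf x (hs hx))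
  have himgTg : ∀ n, g '' Icc (l (n+1)) (r (n+1)) = Icc (l n) (r n) :=
    fun n => (himg_eq _ (hsubT (n+1))).trans (himgT n)
  have hgsurj : g '' Icc 0 1 = Icc 0 1 := (himg_eq _ (fun x hx => hx)).trans hsurj
  -- preimage interval choice
  have hlift : ∀ u v : ℝ, ∃ a b : ℝ, u ≤ v → Icc u v ⊆ Icc 0 1 →
      (a ≤ b ∧ Icc a b ⊆ Icc 0 1 ∧ g '' Icc a b = Icc u v) := by
    intro u v
    by_cases h : u ≤ v ∧ Icc u v ⊆ Icc 0 1
    · obtain ⟨huv, hsub⟩ := h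
      have hu : u ∈ Icc (0:ℝ) 1 := hsub ⟨le_refl u, huv⟩
      have hv : v ∈ Icc (0:ℝ) 1 := hsub ⟨huv, le_refl v⟩
      have hu' : u ∈ g '' Icc 0 1 := by rw [hgsurj]; exact hu
      have hv' : v ∈ g '' Icc 0 1 := by rw [hgsurj]; exact hv
      obtain ⟨p, hp01, hpu⟩ := hu'
      obtain ⟨q, hq01, hqv⟩ := hv'
      obtain ⟨a, b, h1, h2, h3, h4⟩ := ivt_onto hg hpu hqv huv
      refine ⟨a, b, fun _ _ => ⟨h2, ?_, h4⟩⟩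
      intro x hx
      exact ⟨le_trans (le_min hp01.1 hq01.1) (le_trans h1 hx.1),
        le_trans hx.2 (le_trans h3 (max_le hp01.2 hq01.2))⟩
    · exact ⟨0, 0, fun h1 h2 => absurd ⟨h1, h2⟩ h⟩
  choose LA LB hL using hlift
  -- strictly increasing sequence in N above m+1
  have hgt : ∀ k : ℕ, ∃ p, p ∈ N ∧ k < p := by
    intro k
    obtain ⟨p, hp, hk⟩ := hNinf.exists_gt k
    exact ⟨p, hp, hk⟩
  choose nx hnxN hnxgt using hgt
  set nn : ℕ → ℕ := fun j => Nat.rec (nx (m+1)) (fun _ p => nx p) j with hnndef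
  have hnnN : ∀ j, nn j ∈ N := by
    intro j
    cases j with
    | zero => exact hnxN (m+1)
    | succ i => exact hnxN (nn i)
  have hnnlt : ∀ j, nn j < nn (j+1) := fun j => hnxgt (nn j)
  have hnnm : ∀ j, m + 1 < nn j := by
    intro j
    induction j with
    | zero => exact hnxgt (m+1)
    | succ i ih => exact lt_trans ih (hnnlt i)
  have hnnj : ∀ j, j ≤ nn j := fun j => (strictMono_nat_of_lt_succ hnnlt).le_apply
  have hnn1 : ∀ j, 1 ≤ nn j := fun j => by have := hnnm j; omega
  -- split interval data
  have hSdata : ∀ j, ∃ u v : ℝ, u < v ∧ S (nn j) = Icc u v := fun j => (hS (nn j) (hnnN j)).1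
  choose U V hUV hSUV using hSdata
  have hSsub : ∀ j, Icc (U j) (V j) ⊆ Icc (0:ℝ) 1 :=
    fun j => (hSUV j) ▸ (hS (nn j) (hnnN j)).2.1
  have hSimg : ∀ j, g '' Icc (U j) (V j) = Icc (l (nn j - 1)) (r (nn j - 1)) := by
    intro j
    have h1 : f '' S (nn j) = f '' Icc (l (nn j)) (r (nn j)) := (hS (nn j) (hnnN j)).2.2.2
    have h2 : f '' Icc (l (nn j)) (r (nn j)) = Icc (l (nn j - 1)) (r (nn j - 1)) := by
      have h3 := himgT (nn j - 1)
      rwa [show nn j - 1 + 1 = nn j by have := hnn1 j; omega] at h3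
    calc g '' Icc (U j) (V j) = f '' Icc (U j) (V j) := himg_eq _ (hSsub j)
      _ = f '' S (nn j) := by rw [hSUV j]
      _ = Icc (l (nn j - 1)) (r (nn j - 1)) := h1.trans h2
  -- chains above the splitting intervals
  set P : ℕ → ℕ → ℝ × ℝ :=
    fun j i => Nat.rec (U j, V j) (fun _ p => (LA p.1 p.2, LB p.1 p.2)) i with hPdef
  have hPinv : ∀ j i, (P j i).1 ≤ (P j i).2 ∧ Icc (P j i).1 (P j i).2 ⊆ Icc 0 1 := by
    intro j i
    induction i with
    | zero => exact ⟨(hUV j).le, hSsub j⟩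
    | succ i ih =>
        have h := hL (P j i).1 (P j i).2 ih.1 ih.2
        exact ⟨h.1, h.2.1⟩
  have hPimg : ∀ j i, g '' Icc (P j (i+1)).1 (P j (i+1)).2 = Icc (P j i).1 (P j i).2 :=
    fun j i => (hL (P j i).1 (P j i).2 (hPinv j i).1 (hPinv j i).2).2.2
  -- the interval sequences for the Cs
  set aa : ℕ → ℕ → ℝ := fun j k => if k < nn j then l k else (P j (k - nn j)).1 with haadef
  set bb : ℕ → ℕ → ℝ := fun j k => if k < nn j then r k else (P j (k - nn j)).2 with hbbdef
  have haabb : ∀ j k, aa j k ≤ bb j k := by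
    intro j k
    simp only [haadef, hbbdef]
    by_cases h : k < nn j
    · rw [if_pos h, if_pos h]; exact hlr k
    · rw [if_neg h, if_neg h]; exact (hPinv j (k - nn j)).1
  have haasub : ∀ j k, Icc (aa j k) (bb j k) ⊆ Icc (0:ℝ) 1 := by
    intro j k
    simp only [haadef, hbbdef]
    by_cases h : k < nn j
    · rw [if_pos h, if_pos h]; exact hsubT k
    · rw [if_neg h, if_neg h]; exact (hPinv j (k - nn j)).2
  have haaimg : ∀ j k, g '' Icc (aa j (k+1)) (bb j (k+1)) = Icc (aa j k) (bb j k) := by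
    intro j k
    simp only [haadef, hbbdef]
    by_cases h1 : k + 1 < nn j
    · rw [if_pos h1, if_pos h1, if_pos (show k < nn j by omega), if_pos (show k < nn j by omega)]
      exact himgTg k
    · by_cases h2 : k < nn j
      · rw [if_neg h1, if_neg h1, if_pos h2, if_pos h2]
        rw [show k + 1 - nn j = 0 by omega]
        have h3 := hSimg j
        rw [show nn j - 1 = k by omega] at h3
        exact h3
      · rw [if_neg h1, if_neg h1, if_neg h2, if_neg h2]
        rw [show k + 1 - nn j = (k - nn j) + 1 by omega]
        exact hPimg j (k - nn j)
  -- the continua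
  set C : Set (ℕ → ℝ) := chainSet g l r with hCdef
  set Cs : ℕ → Set (ℕ → ℝ) := fun j => chainSet g (aa j) (bb j) with hCsdef
  have hsub_inv : ∀ (a b : ℕ → ℝ), (∀ k, Icc (a k) (b k) ⊆ Icc (0:ℝ) 1) →
      chainSet g a b ⊆ invLimit f := by
    intro a b hsub x hx
    refine ⟨fun n => hsub n (hx.1 n), fun n => ?_⟩
    rw [← hgf _ (hsub (n+1) (hx.1 (n+1)))]
    exact hx.2 n
  have hCsub : C ⊆ invLimit f := hsub_inv l r hsubT
  have hCssub : ∀ j, Cs j ⊆ invLimit f := fun j => hsub_inv (aa j) (bb j) (haasub j)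
  have hCcomp : IsCompact C := isCompact_chainSet hg l r
  have hCscomp : ∀ j, IsCompact (Cs j) := fun j => isCompact_chainSet hg (aa j) (bb j)
  have hCconn : IsConnected C := isConnected_chainSet hg hlr himgTg
  have hCsconn : ∀ j, IsConnected (Cs j) :=
    fun j => isConnected_chainSet hg (haabb j) (haaimg j)
  have hCnt : C.Nontrivial := chainSet_nontrivial himgTg (hm (m+1) (Nat.lt_succ_self m))
  have haaU : ∀ j, aa j (nn j) = U j := by
    intro j
    simp only [haadef]
    rw [if_neg (lt_irrefl (nn j)), Nat.sub_self]
    rfl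
  have hbbV : ∀ j, bb j (nn j) = V j := by
    intro j
    simp only [hbbdef]
    rw [if_neg (lt_irrefl (nn j)), Nat.sub_self]
    rfl
  have hCsnt : ∀ j, (Cs j).Nontrivial := by
    intro j
    refine chainSet_nontrivial (haaimg j) (j := nn j) ?_
    rw [haaU j, hbbV j]; exact hUV j
  -- agreement below nn j
  have haal : ∀ j k, k < nn j → aa j k = l k := by
    intro j k hk; simp only [haadef]; rw [if_pos hk]
  have hbbr : ∀ j k, k < nn j → bb j k = r k := by
    intro j k hk; simp only [hbbdef]; rw [if_pos hk]
  have hmatch1 : ∀ j, ∀ x ∈ Cs j, ∃ y ∈ C, ∀ k < nn j, x k = y k := by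
    intro j x hx
    have hmem : x (nn j - 1) ∈ Icc (l (nn j - 1)) (r (nn j - 1)) := by
      have h1 := hx.1 (nn j - 1)
      rwa [haal j _ (by have := hnn1 j; omega), hbbr j _ (by have := hnn1 j; omega)] at h1
    obtain ⟨y, hy, hyj⟩ := exists_mem_chainSet himgTg (nn j - 1) hmem
    refine ⟨y, hy, ?_⟩
    intro k hk
    have hdx := chain_det hx.2 k (nn j - 1 - k)
    have hdy := chain_det hy.2 k (nn j - 1 - k)
    rw [show k + (nn j - 1 - k) = nn j - 1 by omega] at hdx hdy
    rw [hdx, hdy, hyj]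
  have hmatch2 : ∀ j, ∀ y ∈ C, ∃ x ∈ Cs j, ∀ k < nn j, x k = y k := by
    intro j y hy
    have hmem : y (nn j - 1) ∈ Icc (aa j (nn j - 1)) (bb j (nn j - 1)) := by
      rw [haal j _ (by have := hnn1 j; omega), hbbr j _ (by have := hnn1 j; omega)]
      exact hy.1 (nn j - 1)
    obtain ⟨x, hx, hxj⟩ := exists_mem_chainSet (haaimg j) (nn j - 1) hmem
    refine ⟨x, hx, ?_⟩
    intro k hk
    have hdx := chain_det hx.2 k (nn j - 1 - k)
    have hdy := chain_det hy.2 k (nn j - 1 - k)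
    rw [show k + (nn j - 1 - k) = nn j - 1 by omega] at hdx hdy
    rw [hdx, hdy, hxj]
  -- Hausdorff convergence
  have htend : Tendsto (fun j => seqHausdorffDist (Cs j) C) atTop (𝓝 0) := by
    have hub : ∀ j, seqHausdorffDist (Cs j) C ≤ 2 * (1/2)^(nn j) := by
      intro j
      refine seqHausdorffDist_le _ _ _ (by positivity) ?_ ?_
      · intro x hx
        obtain ⟨y, hy, hagree⟩ := hmatch1 j x hx
        exact ⟨y, hy, pdist_le_of_agree hagree⟩
      · intro y hy
        obtain ⟨x, hx, hagree⟩ := hmatch2 j y hy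
        exact ⟨x, hx, pdist_le_of_agree hagree⟩
    have hub2 : ∀ j, seqHausdorffDist (Cs j) C ≤ 2 * (1/2:ℝ)^j := by
      intro j
      refine (hub j).trans ?_
      have h5 : ((1:ℝ)/2)^(nn j) ≤ (1/2)^j :=
        pow_le_pow_of_le_one (by norm_num) (by norm_num) (hnnj j)
      linarith
    have h0 : Tendsto (fun j : ℕ => 2 * ((1:ℝ)/2)^j) atTop (𝓝 0) := by
      have h1 : Tendsto (fun j : ℕ => 2 * ((1:ℝ)/2)^j) atTop (𝓝 (2 * 0)) :=
        (tendsto_pow_atTop_nhds_zero_of_lt_one (by norm_num) (by norm_num)).const_mul 2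
      simpa using h1
    exact squeeze_zero (fun j => seqHausdorffDist_nonneg _ _) hub2 h0
  -- distinctness
  have hSmem : ∀ j (x : ℕ → ℝ), x ∈ Cs j → x ∈ C →
      x (nn j) = l (nn j) ∨ x (nn j) = r (nn j) := by
    intro j x hxs hxc
    have h1 : x (nn j) ∈ S (nn j) := by
      rw [hSUV j]
      have := hxs.1 (nn j)
      rwa [haaU j, hbbV j] at this
    have h2 : x (nn j) ∈ Icc (l (nn j)) (r (nn j)) := hxc.1 (nn j)
    have h3 := (hS (nn j) (hnnN j)).2.2.1 ⟨h1, h2⟩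
    simpa using h3
  have hCsneC : ∀ j, Cs j ≠ C := by
    intro j heq
    have hwmem : (U j + V j)/2 ∈ Icc (aa j (nn j)) (bb j (nn j)) := by
      rw [haaU j, hbbV j]
      have := hUV j
      exact ⟨by linarith, by linarith⟩
    have humem : U j ∈ Icc (aa j (nn j)) (bb j (nn j)) := by
      rw [haaU j, hbbV j]; exact ⟨le_refl _, (hUV j).le⟩
    have hvmem : V j ∈ Icc (aa j (nn j)) (bb j (nn j)) := by
      rw [haaU j, hbbV j]; exact ⟨(hUV j).le, le_refl _⟩
    obtain ⟨xu, hxu, hxuj⟩ := exists_mem_chainSet (haaimg j) (nn j) humem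
    obtain ⟨xv, hxv, hxvj⟩ := exists_mem_chainSet (haaimg j) (nn j) hvmem
    obtain ⟨xw, hxw, hxwj⟩ := exists_mem_chainSet (haaimg j) (nn j) hwmem
    have hu := hSmem j xu hxu (heq ▸ hxu)
    have hv := hSmem j xv hxv (heq ▸ hxv)
    have hw := hSmem j xw hxw (heq ▸ hxw)
    rw [hxuj] at hu
    rw [hxvj] at hv
    rw [hxwj] at hw
    have huv := hUV j
    rcases hu with hu | hu <;> rcases hv with hv | hv <;> rcases hw with hw | hw <;> linarith
  -- determination by later coordinates in the inverse limit
  have hdet : ∀ x ∈ invLimit f, ∀ k i, x k = g^[i] (x (k + i)) := by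
    intro x hx
    have hch : ∀ k, g (x (k+1)) = x k := fun k => by
      rw [hgf _ (hx.1 (k+1))]; exact hx.2 k
    exact chain_det hch
  refine ⟨⟨C, Cs, hCsub, hCcomp, hCconn, hCnt,
    fun j => ⟨hCssub j, hCscomp j, hCsconn j, hCsnt j, hCsneC j⟩, htend⟩, ?_⟩
  -- not an arc
  rintro ⟨e⟩
  set F : ↥(invLimit f) → ℝ := fun z => ((e z : ↥(Icc (0:ℝ) 1)) : ℝ) with hFdef
  have hFc : Continuous F := continuous_subtype_val.comp e.continuous
  have hFinj : Function.Injective F := fun z w h => e.injective (Subtype.ext h)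
  have hF01 : ∀ z, F z ∈ Icc (0:ℝ) 1 := fun z => (e z).2
  set Chat : Set ↥(invLimit f) := Subtype.val ⁻¹' C with hChatdef
  set Cshat : ℕ → Set ↥(invLimit f) := fun j => Subtype.val ⁻¹' (Cs j) with hCshatdef
  have hvalC : Subtype.val '' Chat = C := by
    rw [hChatdef, Subtype.image_preimage_coe, inter_eq_right.2 hCsub]
  have hvalCs : ∀ j, Subtype.val '' (Cshat j) = Cs j := by
    intro j
    rw [hCshatdef]
    rw [Subtype.image_preimage_coe, inter_eq_right.2 (hCssub j)]
  have hChatcomp : IsCompact Chat := by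
    rw [Subtype.isCompact_iff, hvalC]; exact hCcomp
  have hChatconn : IsConnected Chat := by
    obtain ⟨x, hx⟩ := hCconn.nonempty
    refine ⟨⟨⟨x, hCsub hx⟩, hx⟩, ?_⟩
    rw [← IsInducing.subtypeVal.isPreconnected_image]
    rw [show Subtype.val '' Chat = C from hvalC]
    exact hCconn.isPreconnected
  have hCshatconn : ∀ j, IsConnected (Cshat j) := by
    intro j
    obtain ⟨x, hx⟩ := (hCsconn j).nonempty
    refine ⟨⟨⟨x, hCssub j hx⟩, hx⟩, ?_⟩
    rw [← IsInducing.subtypeVal.isPreconnected_image]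
    rw [show Subtype.val '' (Cshat j) = Cs j from hvalCs j]
    exact (hCsconn j).isPreconnected
  set D : Set ℝ := F '' Chat with hDdef
  set Dj : ℕ → Set ℝ := fun j => F '' (Cshat j) with hDjdef
  have hDcomp : IsCompact D := hChatcomp.image hFc
  have hDconn : IsConnected D := hChatconn.image F hFc.continuousOn
  have hDjconn : ∀ j, IsConnected (Dj j) := fun j => (hCshatconn j).image F hFc.continuousOn
  set α : ℝ := sInf D with hαdef
  set β : ℝ := sSup D with hβdef
  have hDeq : D = Icc α β := eq_Icc_of_connected_compact hDconn hDcomp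
  have hαβ : α < β := by
    obtain ⟨s, hs, t, ht, hst⟩ : D.Nontrivial := by
      obtain ⟨x, hx, y, hy, hxy⟩ := hCnt
      refine ⟨F ⟨x, hCsub hx⟩, ⟨⟨x, hCsub hx⟩, hx, rfl⟩,
        F ⟨y, hCsub hy⟩, ⟨⟨y, hCsub hy⟩, hy, rfl⟩, ?_⟩
      intro hFeq
      exact hxy (congrArg Subtype.val (hFinj hFeq))
    rw [hDeq] at hs ht
    rcases lt_or_gt_of_ne hst with h | h
    · calc α ≤ s := hs.1
        _ < t := h
        _ ≤ β := ht.2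
    · calc α ≤ t := ht.1
        _ < s := h
        _ ≤ β := hs.2
  set δ : ℝ := (β - α)/3 with hδdef
  have hδpos : 0 < δ := by rw [hδdef]; linarith
  -- endpoints are limits of points of Dj
  have hα : α ∈ D := by rw [hDeq]; exact ⟨le_refl α, hαβ.le⟩
  have hβ : β ∈ D := by rw [hDeq]; exact ⟨hαβ.le, le_refl β⟩
  obtain ⟨za, hza, hFza⟩ := hα
  obtain ⟨zb, hzb, hFzb⟩ := hβ
  have hpick : ∀ (z : ↥(invLimit f)), (z : ℕ → ℝ) ∈ C →
      ∀ j : ℕ, ∃ w, w ∈ Cs j ∧ pdist (z : ℕ → ℝ) w < seqHausdorffDist (Cs j) C + (1/2)^j := by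
    intro z hz j
    obtain ⟨w, hw, hd⟩ := seqHausdorff_exists_near (hCsconn j).nonempty hz
      (show (0:ℝ) < (1/2)^j by positivity)
    exact ⟨w, hw, hd⟩
  choose wa hwa hwad using hpick za hza
  choose wb hwb hwbd using hpick zb hzb
  have hconv : ∀ (z : ℕ → ℝ) (w : ℕ → ℕ → ℝ),
      (∀ j, pdist z (w j) < seqHausdorffDist (Cs j) C + (1/2)^j) →
      Tendsto (fun j => w j) atTop (𝓝 z) := by
    intro z w hd
    have hpd : Tendsto (fun j => pdist z (w j)) atTop (𝓝 0) := by
      refine squeeze_zero (fun j => pdist_nonneg _ _) (fun j => (hd j).le) ?_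
      have h1 : Tendsto (fun j : ℕ => seqHausdorffDist (Cs j) C + (1/2:ℝ)^j) atTop (𝓝 (0 + 0)) :=
        htend.add (tendsto_pow_atTop_nhds_zero_of_lt_one (by norm_num) (by norm_num))
      simpa using h1
    rw [tendsto_pi_nhds]
    intro k
    rw [Metric.tendsto_atTop]
    intro ε hε
    have hev : ∀ᶠ j in atTop, pdist z (w j) < min ((1/2)^k) ε :=
      hpd.eventually (gt_mem_nhds (lt_min (by positivity) hε))
    obtain ⟨Nj, hNj⟩ := eventually_atTop.1 hev
    refine ⟨Nj, fun j hj => ?_⟩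
    have h2 := hNj j hj
    have h3 : dist (z k) (w j k) ≤ pdist z (w j) :=
      dist_coord_le (lt_of_lt_of_le h2 (min_le_left _ _))
    rw [dist_comm]
    exact lt_of_le_of_lt h3 (lt_of_lt_of_le h2 (min_le_right _ _))
  have hconva : Tendsto (fun j => F ⟨wa j, hCssub j (hwa j)⟩) atTop (𝓝 α) := by
    have h1 : Tendsto (fun j => (⟨wa j, hCssub j (hwa j)⟩ : ↥(invLimit f))) atTop (𝓝 za) :=
      tendsto_subtype_rng.2 (hconv _ wa hwad)
    rw [← hFza]
    exact (hFc.tendsto za).comp h1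
  have hconvb : Tendsto (fun j => F ⟨wb j, hCssub j (hwb j)⟩) atTop (𝓝 β) := by
    have h1 : Tendsto (fun j => (⟨wb j, hCssub j (hwb j)⟩ : ↥(invLimit f))) atTop (𝓝 zb) :=
      tendsto_subtype_rng.2 (hconv _ wb hwbd)
    rw [← hFzb]
    exact (hFc.tendsto zb).comp h1
  have hev1 : ∀ᶠ j in atTop, F ⟨wa j, hCssub j (hwa j)⟩ < α + δ :=
    hconva.eventually (gt_mem_nhds (by linarith))
  have hev2 : ∀ᶠ j in atTop, β - δ < F ⟨wb j, hCssub j (hwb j)⟩ :=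
    hconvb.eventually (lt_mem_nhds (by linarith))
  obtain ⟨J, hJ⟩ := eventually_atTop.1 (hev1.and hev2)
  set M : Set ℝ := Icc (α + δ) (β - δ) with hMdef
  have hD01 : D ⊆ Icc (0:ℝ) 1 := by
    rintro - ⟨z, -, rfl⟩
    exact hF01 z
  have hMD : M ⊆ D := by
    rw [hDeq, hMdef]
    exact Icc_subset_Icc (by linarith) (by linarith)
  have hMDj : ∀ j, J ≤ j → M ⊆ Dj j := by
    intro j hj
    have h1 := (hJ j hj).1
    have h2 := (hJ j hj).2
    have hpa : F ⟨wa j, hCssub j (hwa j)⟩ ∈ Dj j := ⟨⟨wa j, hCssub j (hwa j)⟩, hwa j, rfl⟩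
    have hpb : F ⟨wb j, hCssub j (hwb j)⟩ ∈ Dj j := ⟨⟨wb j, hCssub j (hwb j)⟩, hwb j, rfl⟩
    have hIcc := (hDjconn j).isPreconnected.Icc_subset hpa hpb
    intro t ht
    rw [hMdef] at ht
    exact hIcc ⟨h1.le.trans ht.1, ht.2.trans h2.le⟩
  set G : ↥(Icc (0:ℝ) 1) → (ℕ → ℝ) := fun t => ((e.symm t : ↥(invLimit f)) : ℕ → ℝ) with hGdef
  have hGc : Continuous G := continuous_subtype_val.comp e.symm.continuous
  have hGinj : Function.Injective G := fun s t h => e.symm.injective (Subtype.ext h)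
  set Mhat : Set ↥(Icc (0:ℝ) 1) := Subtype.val ⁻¹' M with hMhatdef
  have hvalM : Subtype.val '' Mhat = M := by
    rw [hMhatdef, Subtype.image_preimage_coe, inter_eq_right.2 (hMD.trans hD01)]
  have hMhatconn : IsPreconnected Mhat := by
    rw [← IsInducing.subtypeVal.isPreconnected_image,
      show Subtype.val '' Mhat = M from hvalM, hMdef]
    exact isPreconnected_Icc
  set M' : Set (ℕ → ℝ) := G '' Mhat with hM'def
  have hM'conn : IsPreconnected M' := hMhatconn.image G hGc.continuousOn
  have hαδβδ : α + δ < β - δ := by rw [hδdef]; linarith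
  have ht1M : (α + δ) ∈ M := by rw [hMdef]; exact ⟨le_refl _, hαδβδ.le⟩
  have ht2M : (β - δ) ∈ M := by rw [hMdef]; exact ⟨hαδβδ.le, le_refl _⟩
  have hM'nt : M'.Nontrivial := by
    refine ⟨G ⟨α + δ, (hMD.trans hD01) ht1M⟩, ⟨⟨α + δ, (hMD.trans hD01) ht1M⟩, ht1M, rfl⟩,
      G ⟨β - δ, (hMD.trans hD01) ht2M⟩, ⟨⟨β - δ, (hMD.trans hD01) ht2M⟩, ht2M, rfl⟩, ?_⟩
    intro h
    have := hGinj h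
    have h2 : α + δ = β - δ := congrArg Subtype.val this
    linarith
  have htransfer : ∀ (A : Set (ℕ → ℝ)) (Ahat : Set ↥(invLimit f)), Subtype.val '' Ahat = A →
      ∀ t : ↥(Icc (0:ℝ) 1), (t : ℝ) ∈ F '' Ahat → G t ∈ A := by
    intro A Ahat hAval t ht
    obtain ⟨z, hz, hFz⟩ := ht
    have hez : e z = t := Subtype.ext hFz
    have hGt : G t = (z : ℕ → ℝ) := by
      simp only [hGdef]
      rw [← hez, Homeomorph.symm_apply_apply]
    rw [hGt, ← hAval]
    exact ⟨z, hz, rfl⟩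
  have hMC : ∀ x ∈ M', x ∈ C := by
    rintro - ⟨t, ht, rfl⟩
    exact htransfer C Chat hvalC t (hMD ht)
  have hMCs : ∀ j, J ≤ j → ∀ x ∈ M', x ∈ Cs j := by
    rintro j hj - ⟨t, ht, rfl⟩
    exact htransfer (Cs j) (Cshat j) (hvalCs j) t (hMDj j hj ht)
  -- coordinates are eventually constant on M', contradiction with nontriviality
  have hcoordLR : ∀ j, J ≤ j → ∀ x ∈ M', x (nn j) = l (nn j) ∨ x (nn j) = r (nn j) :=
    fun j hj x hx => hSmem j x (hMCs j hj x hx) (hMC x hx)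
  obtain ⟨x, hx, y, hy, hxy⟩ := hM'nt
  refine hxy (funext fun k => ?_)
  set j : ℕ := max J k with hjdef
  have hjJ : J ≤ j := le_max_left _ _
  have hjk : k ≤ nn j := le_trans (le_max_right J k) (hnnj j)
  have hlrj : l (nn j) < r (nn j) := hm (nn j) (by have := hnnm j; omega)
  have hxnn : x (nn j) = y (nn j) := by
    by_contra hne
    have hxm := hcoordLR j hjJ x hx
    have hym := hcoordLR j hjJ y hy
    have himgconn : IsPreconnected ((fun z : ℕ → ℝ => z (nn j)) '' M') :=
      hM'conn.image _ (continuous_apply (nn j)).continuousOn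
    have hxmem : x (nn j) ∈ (fun z : ℕ → ℝ => z (nn j)) '' M' := ⟨x, hx, rfl⟩
    have hymem : y (nn j) ∈ (fun z : ℕ → ℝ => z (nn j)) '' M' := ⟨y, hy, rfl⟩
    have hmid : (l (nn j) + r (nn j))/2 ∈ (fun z : ℕ → ℝ => z (nn j)) '' M' := by
      rcases hxm with h1 | h1 <;> rcases hym with h2 | h2
      · exact absurd (h1.trans h2.symm) hne
      · refine himgconn.Icc_subset hxmem hymem ?_
        rw [h1, h2]
        constructor <;> linarith
      · refine himgconn.Icc_subset hymem hxmem ?_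
        rw [h1, h2]
        constructor <;> linarith
      · exact absurd (h1.trans h2.symm) hne
    obtain ⟨z, hz, hzeq⟩ := hmid
    have hz2 : z (nn j) = (l (nn j) + r (nn j))/2 := hzeq
    rcases hcoordLR j hjJ z hz with h | h <;> rw [hz2] at h <;> linarith
  have hxC : x ∈ invLimit f := hCsub (hMC x hx)
  have hyC : y ∈ invLimit f := hCsub (hMC y hy)
  have hdx := hdet x hxC k (nn j - k)
  have hdy := hdet y hyC k (nn j - k)
  rw [show k + (nn j - k) = nn j by omega] at hdx hdy
  rw [hdx, hdy, hxnn]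
end
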